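/- arXiv:math/0412026 — 6 statements merged into one kernel-verified Lean document; each statement's English description precedes it below -/
import Mathlib

section
/- Let p ⊂ R_2 = ℤ[u₁^{±1}, u₂^{±1}] be a non-principal prime ideal with p ∩ ℤ = {0}. Then the field of fractions K of R_2/p is an algebraic number field; that is, K is a finite-dimensional vector space over ℚ, and in particular K is isomorphic as an additive group to ℚ^n for some n ≥ 1. -/
/-- `R₂ = ℤ[u₁^{±1}, u₂^{±1}]`, the Laurent polynomial ring in two variables,
realized as the group algebra of `ℤ²` over `ℤ`. -/
abbrev R2 : Type := AddMonoidAlgebra ℤ (Fin 2 → ℤ)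


noncomputable section
open Polynomial AddMonoidAlgebra

open Ideal in
theorem aux_principal_of_loc {R : Type*} [CommRing R] [IsDomain R] [UniqueFactorizationMonoid R]
    (S : Submonoid R) (hS : S ≤ nonZeroDivisors R)
    (L : Type*) [CommRing L] [IsDomain L] [IsPrincipalIdealRing L] [Algebra R L]
    [IsLocalization S L]
    (q : Ideal R) (hq : q.IsPrime) (hd : Disjoint (S : Set R) (q : Set R)) (hne : q ≠ ⊥) :
    q.IsPrincipal := by
  obtain ⟨π, hπq, hπ⟩ := hq.exists_mem_prime_of_ne_bot hne
  have hJp : (Ideal.span {π}).IsPrime := (Ideal.span_singleton_prime hπ.ne_zero).mpr hπ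
  have hJq : Ideal.span {π} ≤ q := (Ideal.span_singleton_le_iff_mem _).mpr hπq
  have hdJ : Disjoint (S : Set R) (Ideal.span {π} : Set R) :=
    hd.mono_right (by exact_mod_cast hJq)
  have h1 := IsLocalization.isPrime_of_isPrime_disjoint S L _ hJp hdJ
  have h2 := IsLocalization.isPrime_of_isPrime_disjoint S L _ hq hd
  have hbot : Ideal.map (algebraMap R L) (Ideal.span {π}) ≠ ⊥ := by
    rw [Ideal.map_span]
    simp only [Set.image_singleton, Ne, Ideal.span_singleton_eq_bot]
    intro h
    exact hπ.ne_zero (IsLocalization.injective L hS (by simpa using h))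
  haveI := h1
  have hmax := IsPrime.to_maximal_ideal hbot
  have heq : Ideal.map (algebraMap R L) (Ideal.span {π}) = Ideal.map (algebraMap R L) q :=
    hmax.eq_of_le h2.ne_top (Ideal.map_mono hJq)
  have := congrArg (Ideal.under R) heq
  rw [IsLocalization.comap_map_of_isPrime_disjoint S L hJp hdJ,
    IsLocalization.comap_map_of_isPrime_disjoint S L hq hd] at this
  exact this ▸ ⟨⟨π, rfl⟩⟩



/-- the generator `u_i` -/
def uu (i : Fin 2) : R2 := AddMonoidAlgebra.single (Pi.single i 1) 1

lemma single_one_mul_single_one (a b : Fin 2 → ℤ) :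
    (AddMonoidAlgebra.single (R := ℤ) a 1) * AddMonoidAlgebra.single b 1
      = AddMonoidAlgebra.single (a + b) 1 := by
  rw [AddMonoidAlgebra.single_mul_single, mul_one]

lemma isUnit_single_one (a : Fin 2 → ℤ) :
    IsUnit (AddMonoidAlgebra.single (R := ℤ) a 1) := by
  refine isUnit_iff_exists_inv.mpr ⟨AddMonoidAlgebra.single (-a) 1, ?_⟩
  rw [single_one_mul_single_one, add_neg_cancel, AddMonoidAlgebra.one_def]

lemma single_one_pow (a : Fin 2 → ℤ) (n : ℕ) :
    (AddMonoidAlgebra.single (R := ℤ) a 1) ^ n = AddMonoidAlgebra.single (n • a) 1 := by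
  rw [AddMonoidAlgebra.single_pow, one_pow]

/-- the ring map `ℤ[X][Y] → R2` sending `X ↦ u_i`, `Y ↦ u_j` -/
def φ (i j : Fin 2) : MvPolynomial Unit (Polynomial ℤ) →+* R2 :=
  MvPolynomial.eval₂Hom (Polynomial.eval₂RingHom (Int.castRingHom R2) (uu i)) (fun _ => uu j)

lemma phi_C (i j : Fin 2) (f : Polynomial ℤ) :
    φ i j (MvPolynomial.C f) = Polynomial.eval₂ (Int.castRingHom R2) (uu i) f := by
  simp [φ]

lemma phi_monomial (i j : Fin 2) (r : ℤ) (c d : ℕ) :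
    φ i j (MvPolynomial.C (Polynomial.C r * Polynomial.X ^ c) * MvPolynomial.X () ^ d)
      = AddMonoidAlgebra.single ((c • Pi.single i 1 : Fin 2 → ℤ) + d • Pi.single j 1) r := by
  rw [map_mul, phi_C, map_pow]
  simp only [φ, MvPolynomial.eval₂Hom_X']
  rw [Polynomial.eval₂_mul, Polynomial.eval₂_C, Polynomial.eval₂_pow, Polynomial.eval₂_X]
  show (r : R2) * (uu i) ^ c * (uu j) ^ d = _
  rw [AddMonoidAlgebra.intCast_def, uu, uu, single_one_pow, single_one_pow,
    AddMonoidAlgebra.single_mul_single, AddMonoidAlgebra.single_mul_single]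
  simp

lemma fin2_cases (i j k : Fin 2) (hij : i ≠ j) : k = i ∨ k = j := by
  fin_cases i <;> fin_cases j <;> fin_cases k <;> simp_all

lemma vec_decomp (i j : Fin 2) (hij : i ≠ j) (c d : ℕ) (k : Fin 2) :
    ((c • Pi.single i 1 + d • Pi.single j 1 : Fin 2 → ℤ)) k
      = if k = i then (c : ℤ) else (d : ℤ) := by
  rcases fin2_cases i j k hij with rfl | rfl
  · simp [Pi.single_eq_of_ne (Ne.symm hij)]
    right; exact Pi.single_eq_of_ne hij 1
  · simp [if_neg (Ne.symm hij), Pi.single_eq_of_ne (Ne.symm hij)]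

/-- clearing monomial -/
def mm (c : ℕ) : MvPolynomial Unit (Polynomial ℤ) :=
  MvPolynomial.C (Polynomial.X ^ c) * MvPolynomial.X () ^ c

lemma phi_mm (i j : Fin 2) (hij : i ≠ j) (c : ℕ) :
    φ i j (mm c) = AddMonoidAlgebra.single (fun _ => (c : ℤ)) 1 := by
  have h := phi_monomial i j 1 c c
  rw [map_one (Polynomial.C), one_mul] at h
  rw [mm, h]
  congr 1
  funext k
  rw [vec_decomp i j hij c c k]
  split <;> rfl

lemma surj_single (i j : Fin 2) (hij : i ≠ j) (a : Fin 2 → ℤ) (r : ℤ) :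
    ∃ x, φ i j x = AddMonoidAlgebra.single a r *
      AddMonoidAlgebra.single (fun _ => (((a 0).natAbs + (a 1).natAbs : ℕ) : ℤ)) 1 := by
  set c : ℕ := (a 0).natAbs + (a 1).natAbs with hc
  have hnn : ∀ k : Fin 2, 0 ≤ a k + (c : ℤ) := by
    intro k
    have hk : a k = a 0 ∨ a k = a 1 := by fin_cases k <;> simp
    rw [hc]; rcases hk with h | h <;> rw [h] <;> omega
  refine ⟨MvPolynomial.C (Polynomial.C r * Polynomial.X ^ (a i + c).toNat)
      * MvPolynomial.X () ^ (a j + c).toNat, ?_⟩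
  rw [phi_monomial, AddMonoidAlgebra.single_mul_single, mul_one]
  congr 1
  funext k
  rw [vec_decomp i j hij _ _ k]
  rcases fin2_cases i j k hij with rfl | rfl
  · rw [if_pos rfl, Int.toNat_of_nonneg (hnn k)]; rfl
  · rw [if_neg (Ne.symm hij), Int.toNat_of_nonneg (hnn k)]; rfl

lemma surj_aux' (i j : Fin 2) (hij : i ≠ j) (z : R2) :
    ∃ (c : ℕ) (x : MvPolynomial Unit (Polynomial ℤ)),
      φ i j x = z * AddMonoidAlgebra.single (fun _ => (c : ℤ)) 1 := by
  induction z using AddMonoidAlgebra.induction_linear with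
  | zero => exact ⟨0, 0, by simp⟩
  | add f g hf hg =>
    obtain ⟨c₁, x₁, h₁⟩ := hf
    obtain ⟨c₂, x₂, h₂⟩ := hg
    refine ⟨c₁ + c₂, x₁ * mm c₂ + x₂ * mm c₁, ?_⟩
    rw [map_add, map_mul, map_mul, h₁, h₂, phi_mm i j hij, phi_mm i j hij]
    have hs : ∀ c₁ c₂ : ℕ, ((fun _ => (c₁ : ℤ)) + fun _ => (c₂ : ℤ))
        = fun _ : Fin 2 => ((c₁ + c₂ : ℕ) : ℤ) := by
      intro c₁ c₂; funext k; show (c₁ : ℤ) + c₂ = ((c₁ + c₂ : ℕ) : ℤ); push_cast; ring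
    rw [add_mul, mul_assoc, mul_assoc, single_one_mul_single_one,
      single_one_mul_single_one, hs c₁ c₂, hs c₂ c₁, Nat.add_comm c₂ c₁]
  | single a r =>
    obtain ⟨x, hx⟩ := surj_single i j hij a r
    exact ⟨_, x, hx⟩

attribute [local instance] MvPolynomial.algebraMvPolynomial

lemma exists_poly_mem (p : Ideal R2) (hp : p.IsPrime) (hnp : ¬p.IsPrincipal)
    (i j : Fin 2) (hij : i ≠ j) :
    ∃ f : Polynomial ℤ, f ≠ 0 ∧ Polynomial.aeval (uu i) f ∈ p := by
  classical
  set q : Ideal (MvPolynomial Unit (Polynomial ℤ)) := p.comap (φ i j) with hq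
  haveI hqp : q.IsPrime := hp.comap (φ i j)
  have hmapq : Ideal.map (φ i j) q = p := by
    apply le_antisymm (Ideal.map_le_iff_le_comap.mpr le_rfl)
    intro z hzp
    obtain ⟨c, x, hx⟩ := surj_aux' i j hij z
    have hxq : x ∈ q := by
      show φ i j x ∈ p
      rw [hx]; exact Ideal.mul_mem_right _ _ hzp
    have hz2 : z = φ i j x * AddMonoidAlgebra.single (fun _ => -(c : ℤ)) 1 := by
      rw [hx, mul_assoc, single_one_mul_single_one]
      have : ((fun _ => (c : ℤ)) + fun _ => -(c : ℤ)) = (0 : Fin 2 → ℤ) := by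
        funext k; simp
      rw [this, ← AddMonoidAlgebra.one_def, mul_one]
    rw [hz2]
    exact Ideal.mul_mem_right _ _ (Ideal.mem_map_of_mem _ hxq)
  set S : Submonoid (MvPolynomial Unit (Polynomial ℤ)) :=
    (nonZeroDivisors (Polynomial ℤ)).map
      (MvPolynomial.C : Polynomial ℤ →+* MvPolynomial Unit (Polynomial ℤ)) with hS
  by_cases hdisj : Disjoint (S : Set (MvPolynomial Unit (Polynomial ℤ))) (q : Set _)
  · exfalso
    have hSle : S ≤ nonZeroDivisors (MvPolynomial Unit (Polynomial ℤ)) := by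
      rintro _ ⟨f, hf, rfl⟩
      exact mem_nonZeroDivisors_of_ne_zero
        (by simpa using (mem_nonZeroDivisors_iff_ne_zero.mp hf))
    haveI hpid : IsPrincipalIdealRing (Polynomial (FractionRing (Polynomial ℤ))) :=
      EuclideanDomain.to_principal_ideal_domain
    haveI : IsPrincipalIdealRing (MvPolynomial Unit (FractionRing (Polynomial ℤ))) :=
      IsPrincipalIdealRing.of_surjective
        ((MvPolynomial.pUnitAlgEquiv (FractionRing (Polynomial ℤ))).symm.toRingEquiv : _)
        (MvPolynomial.pUnitAlgEquiv (FractionRing (Polynomial ℤ))).symm.surjective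
    have hqbot : q ≠ ⊥ := by
      intro h
      exact hnp ⟨0, by rw [← hmapq, h, Ideal.map_bot, Ideal.span_zero.symm]; rfl⟩
    have hprin := aux_principal_of_loc S hSle
      (MvPolynomial Unit (FractionRing (Polynomial ℤ))) q hqp hdisj hqbot
    obtain ⟨g, hg⟩ := hprin
    refine hnp ⟨φ i j g, ?_⟩
    rw [← hmapq, hg]
    show Ideal.map (φ i j) (Ideal.span {g}) = _
    rw [Ideal.map_span, Set.image_singleton]
  · obtain ⟨s, hsS, hsq⟩ := Set.not_disjoint_iff.mp hdisj
    obtain ⟨f, hf, rfl⟩ := hsS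
    refine ⟨f, mem_nonZeroDivisors_iff_ne_zero.mp hf, ?_⟩
    have : φ i j (MvPolynomial.C f) ∈ p := hsq
    rwa [phi_C, ← algebraMap_int_eq, ← Polynomial.aeval_def] at this

lemma vec_decompZ (a : Fin 2 → ℤ) :
    a 0 • (Pi.single (0 : Fin 2) 1 : Fin 2 → ℤ) + a 1 • Pi.single 1 1 = a := by
  funext k
  fin_cases k <;> simp

set_option maxHeartbeats 2000000 in
set_option synthInstance.maxHeartbeats 400000 in
/-- If `p ⊂ R₂` is a non-principal prime ideal with `p ∩ ℤ = {0}`,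
then the field of fractions `K` of `R₂/p` is an algebraic number field: `K` is a
finite-dimensional `ℚ`-vector space, i.e. `K` is isomorphic as an additive group to `ℚⁿ`
for some `n ≥ 1`. -/
theorem stmt2 (p : Ideal R2) (hp : p.IsPrime) (hnp : ¬p.IsPrincipal)
    (hz : ∀ m : ℤ, (m : R2) ∈ p → m = 0) :
    ∃ n : ℕ, 1 ≤ n ∧ Nonempty (FractionRing (R2 ⧸ p) ≃+ (Fin n → ℚ)) := by
  classical
  haveI := hp
  have hinjD : Function.Injective (Int.cast : ℤ → R2 ⧸ p) := by
    intro a b h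
    have h2 : ((a - b : ℤ) : R2 ⧸ p) = 0 := by push_cast [h]; ring
    have h3 : ((a - b : ℤ) : R2 ⧸ p) = Ideal.Quotient.mk p ((a - b : ℤ) : R2) :=
      (map_intCast (Ideal.Quotient.mk p) (a - b)).symm
    have h4 : ((a - b : ℤ) : R2) ∈ p := by
      rw [← Ideal.Quotient.eq_zero_iff_mem, ← h3]; exact h2
    have := hz _ h4
    omega
  haveI : CharZero (R2 ⧸ p) :=
    charZero_of_injective_algebraMap (R := ℤ) (by intro a b h; apply hinjD; simpa using h)
  haveI : CharZero (FractionRing (R2 ⧸ p)) := by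
    refine ⟨fun a b h => ?_⟩
    have h2 : algebraMap (R2 ⧸ p) (FractionRing (R2 ⧸ p)) ((a : ℕ) : R2 ⧸ p)
        = algebraMap (R2 ⧸ p) (FractionRing (R2 ⧸ p)) ((b : ℕ) : R2 ⧸ p) := by
      rw [map_natCast, map_natCast]; exact h
    exact Nat.cast_injective (IsFractionRing.injective (R2 ⧸ p) (FractionRing (R2 ⧸ p)) h2)
  set ψ : R2 →+* FractionRing (R2 ⧸ p) :=
    (algebraMap (R2 ⧸ p) (FractionRing (R2 ⧸ p))).comp (Ideal.Quotient.mk p) with hψ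
  set x : Fin 2 → FractionRing (R2 ⧸ p) := fun i => ψ (uu i) with hx
  have key : ∀ i : Fin 2, IsIntegral ℚ (x i) := by
    intro i
    obtain ⟨j, hij⟩ : ∃ j, i ≠ j := by
      fin_cases i
      exacts [⟨1, by decide⟩, ⟨0, by decide⟩]
    obtain ⟨f, hf0, hfp⟩ := exists_poly_mem p hp hnp i j hij
    have h1 : Polynomial.eval₂ (Int.castRingHom (FractionRing (R2 ⧸ p))) (x i) f = 0 := by
      have h0 : ψ (Polynomial.aeval (uu i) f) = 0 := by
        rw [hψ]
        simp only [RingHom.comp_apply]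
        rw [Ideal.Quotient.eq_zero_iff_mem.mpr hfp, map_zero]
      rw [Polynomial.aeval_def, Polynomial.hom_eval₂] at h0
      rwa [Subsingleton.elim (ψ.comp (algebraMap ℤ R2))
        (Int.castRingHom (FractionRing (R2 ⧸ p)))] at h0
    apply IsAlgebraic.isIntegral
    refine ⟨f.map (Int.castRingHom ℚ), ?_, ?_⟩
    · exact (Polynomial.map_ne_zero_iff Int.cast_injective).mpr hf0
    · rw [Polynomial.aeval_def, Polynomial.eval₂_map,
        Subsingleton.elim ((algebraMap ℚ (FractionRing (R2 ⧸ p))).comp (Int.castRingHom ℚ))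
          (Int.castRingHom (FractionRing (R2 ⧸ p)))]
      exact h1
  set E := IntermediateField.adjoin ℚ ({x 0, x 1} : Set (FractionRing (R2 ⧸ p))) with hE
  haveI : FiniteDimensional ℚ E := by
    apply IntermediateField.finiteDimensional_adjoin
    intro z hzmem
    rcases Set.mem_insert_iff.mp hzmem with h | h
    · exact h ▸ key 0
    · rw [Set.mem_singleton_iff] at h
      exact h ▸ key 1
  have hxE : ∀ i : Fin 2, x i ∈ E := by
    intro i
    apply IntermediateField.subset_adjoin
    fin_cases i
    · exact Or.inl rfl
    · exact Or.inr rfl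
  have hpow : ∀ (i : Fin 2) (n : ℤ),
      ψ (AddMonoidAlgebra.single ((n • Pi.single i 1 : Fin 2 → ℤ)) 1) ∈ E := by
    intro i n
    have hnat : ∀ m : ℕ,
        ψ (AddMonoidAlgebra.single (((m : ℤ) • Pi.single i 1 : Fin 2 → ℤ)) 1) = (x i) ^ m := by
      intro m
      rw [natCast_zsmul, ← single_one_pow, map_pow]
      rfl
    rcases n with m | m
    · rw [Int.ofNat_eq_coe, hnat m]
      exact pow_mem (hxE i) m
    · have hmul : ψ (AddMonoidAlgebra.single ((Int.negSucc m • Pi.single i 1 : Fin 2 → ℤ)) 1)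
          * (x i) ^ (m + 1) = 1 := by
        rw [← hnat (m + 1), ← map_mul, single_one_mul_single_one, ← add_zsmul]
        have h5 : (Int.negSucc m + ((m + 1 : ℕ) : ℤ)) = 0 := by
          rw [Int.negSucc_eq]; push_cast; ring
        rw [h5, zero_zsmul, ← AddMonoidAlgebra.one_def, map_one]
      rw [eq_inv_of_mul_eq_one_left hmul]
      exact E.inv_mem (pow_mem (hxE i) (m + 1))
  have hmem : ∀ z : R2, ψ z ∈ E := by
    intro z
    induction z using AddMonoidAlgebra.induction_linear with
    | zero => rw [map_zero]; exact zero_mem E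
    | add f g hf hg => rw [map_add]; exact add_mem hf hg
    | single a r =>
      have hsplit : AddMonoidAlgebra.single (R := ℤ) a r
          = (r : R2) * (AddMonoidAlgebra.single (a 0 • Pi.single 0 1 : Fin 2 → ℤ) 1
            * AddMonoidAlgebra.single (a 1 • Pi.single 1 1 : Fin 2 → ℤ) 1) := by
        rw [single_one_mul_single_one, vec_decompZ, AddMonoidAlgebra.intCast_def,
          AddMonoidAlgebra.single_mul_single]
        simp
      show ψ (AddMonoidAlgebra.single a r) ∈ E
      rw [hsplit, map_mul, map_mul, map_intCast]
      exact mul_mem (intCast_mem E r) (mul_mem (hpow 0 (a 0)) (hpow 1 (a 1)))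
  have htop : E = ⊤ := by
    rw [eq_top_iff]
    rintro k -
    obtain ⟨a, b, hb, hk⟩ := IsFractionRing.div_surjective (A := R2 ⧸ p) k
    obtain ⟨za, rfl⟩ := Ideal.Quotient.mk_surjective a
    obtain ⟨zb, rfl⟩ := Ideal.Quotient.mk_surjective b
    rw [← hk]
    exact div_mem (hmem za) (hmem zb)
  haveI : FiniteDimensional ℚ (FractionRing (R2 ⧸ p)) := by
    have e : E ≃ₗ[ℚ] FractionRing (R2 ⧸ p) :=
      ((IntermediateField.equivOfEq htop).trans IntermediateField.topEquiv).toLinearEquiv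
    exact Module.Finite.equiv e
  refine ⟨Module.finrank ℚ (FractionRing (R2 ⧸ p)), Module.finrank_pos, ⟨?_⟩⟩
  exact (Module.finBasis ℚ (FractionRing (R2 ⧸ p))).equivFun.toAddEquiv

end
end

section
/- Let d ≥ 1 and let p ⊂ R_d = ℤ[u₁^{±1},…,u_d^{±1}] be a nonzero, non-principal prime ideal. Then p has nonzero intersection with the subring R_{d−1} = ℤ[u₁^{±1},…,u_{d−1}^{±1}] (the image of the Laurent polynomial ring in the first d−1 variables under the natural inclusion into R_d); that is, R_{d−1} ∩ p ≠ {0}. -/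
/-- `R_d = ℤ[u₁^{±1},…,u_d^{±1}]`, the Laurent polynomial ring in `d` variables,
realized as the group algebra of `ℤ^d` over `ℤ`. -/
abbrev Rd (d : ℕ) : Type := AddMonoidAlgebra ℤ (Fin d → ℤ)

/-- The embedding `ℤ^{d-1} → ℤ^d` (extension by zero in the last coordinate). -/
def zEmb (d : ℕ) : (Fin (d - 1) → ℤ) →+ (Fin d → ℤ) where
  toFun v := fun i => if h : (i : ℕ) < d - 1 then v ⟨i, h⟩ else 0
  map_zero' := by
    funext i
    by_cases h : (i : ℕ) < d - 1 <;> simp [h]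
  map_add' a b := by
    funext i
    by_cases h : (i : ℕ) < d - 1 <;> simp [h]

/-- The inclusion ring homomorphism `R_{d-1} → R_d`. -/
noncomputable def laurentIncl (d : ℕ) : Rd (d - 1) →+* Rd d :=
  AddMonoidAlgebra.mapDomainRingHom ℤ (zEmb d)

instance RdDomain (d : ℕ) : IsDomain (Rd d) := NoZeroDivisors.to_isDomain _
open Polynomial in
theorem polyPrincipal (R : Type) [CommRing R] [IsDomain R] [UniqueFactorizationMonoid R]
    (q : Ideal R[X]) (hq : q.IsPrime) (hq0 : q ≠ ⊥) (hqR : ∀ r : R, C r ∈ q → r = 0) :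
    ∃ π : R[X], π ∈ q ∧ q = Ideal.span {π} := by
  have hex : ∃ n : ℕ, ∃ f ∈ q, f ≠ 0 ∧ f.natDegree = n := by
    obtain ⟨f, hfq, hf0⟩ := Submodule.exists_mem_ne_zero_of_ne_bot hq0
    exact ⟨f.natDegree, f, hfq, hf0, rfl⟩
  classical
  obtain ⟨f, hfq, hf0, hfn⟩ := Nat.find_spec hex
  set n := Nat.find hex with hn
  have hmin : ∀ g ∈ q, g ≠ 0 → n ≤ g.natDegree := by
    intro g hg hg0
    exact Nat.find_min' hex ⟨g, hg, hg0, rfl⟩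
  -- get a prime element π ∈ q of natDegree n
  obtain ⟨m, hmp, hassoc⟩ := UniqueFactorizationMonoid.exists_prime_factors f hf0
  obtain ⟨u, hu⟩ := hassoc
  have hprodq : m.prod ∈ q := by
    have : m.prod = f * ↑u⁻¹ := by
      rw [← hu]; rw [mul_assoc]; simp
    rw [this]; exact q.mul_mem_right _ hfq
  obtain ⟨π, hπm, hπq⟩ : ∃ π ∈ m, π ∈ q :=
    (hq.multiset_prod_mem_iff_exists_mem m).mp hprodq
  have hπ : Prime π := hmp π hπm
  have hπ0 : π ≠ 0 := hπ.ne_zero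
  have hπdvdf : π ∣ f := (Multiset.dvd_prod hπm).trans (Dvd.intro _ hu)
  have hπn : π.natDegree = n := le_antisymm (hfn ▸ natDegree_le_of_dvd hπdvdf hf0)
    (hmin π hπq hπ0)
  have hπ1 : 1 ≤ π.natDegree := by
    rcases Nat.eq_zero_or_pos π.natDegree with h0 | h1
    · exfalso
      have := eq_C_of_natDegree_eq_zero h0
      have hc0 : π.coeff 0 = 0 := hqR _ (this ▸ hπq)
      rw [hc0, map_zero] at this
      exact hπ0 this
    · exact h1
  -- every element of q is divisible by π
  have key : ∀ N : ℕ, ∀ g ∈ q, g.natDegree = N → π ∣ g := by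
    intro N
    induction N using Nat.strong_induction_on with
    | _ N IH =>
      intro g hgq hgN
      by_cases hg0 : g = 0
      · simp [hg0]
      have hNπ : π.natDegree ≤ N := hgN ▸ (hπn ▸ hmin g hgq hg0)
      set e := N - π.natDegree with he
      have heN : π.natDegree + e = N := by omega
      set h : R[X] := C π.leadingCoeff * g - C g.leadingCoeff * π * X ^ e with hh
      have hhq : h ∈ q := q.sub_mem (q.mul_mem_left _ hgq)
        (q.mul_mem_left _ hπq |> q.mul_mem_right _)
      have hcoeff : ∀ M : ℕ, N ≤ M → h.coeff M = 0 := by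
        intro M hM
        rcases eq_or_lt_of_le hM with heq | hlt
        · subst heq
          have h1 : (C π.leadingCoeff * g).coeff N = π.leadingCoeff * g.leadingCoeff := by
            rw [coeff_C_mul, ← hgN]; rfl
          have h2 : (C g.leadingCoeff * π * X ^ e).coeff N = g.leadingCoeff * π.leadingCoeff := by
            rw [← heN, coeff_mul_X_pow, coeff_C_mul]; rfl
          rw [hh, coeff_sub, h1, h2, mul_comm, sub_self]
        · have h1 : (C π.leadingCoeff * g).coeff M = 0 := by
            apply coeff_eq_zero_of_natDegree_lt
            exact lt_of_le_of_lt (le_trans (natDegree_C_mul_le _ _) (le_of_eq hgN)) hlt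
          have h2 : (C g.leadingCoeff * π * X ^ e).coeff M = 0 := by
            apply coeff_eq_zero_of_natDegree_lt
            refine lt_of_le_of_lt (le_trans (natDegree_mul_le) ?_) hlt
            have := natDegree_C_mul_le g.leadingCoeff π
            have hX : (X ^ e : R[X]).natDegree ≤ e := natDegree_X_pow_le e
            omega
          rw [hh, coeff_sub, h1, h2, sub_self]
      have hπh : π ∣ h := by
        by_cases hh0 : h = 0
        · simp [hh0]
        · have hdeg : h.natDegree < N := by
            rw [natDegree_lt_iff_degree_lt hh0]
            rw [degree_lt_iff_coeff_zero]
            intro M hM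
            exact hcoeff M (by exact_mod_cast hM)
          exact IH h.natDegree hdeg h hhq rfl
      have hdvd : π ∣ C π.leadingCoeff * g := by
        have hrw : C π.leadingCoeff * g = h + C g.leadingCoeff * π * X ^ e := by
          rw [hh]; ring
        rw [hrw]
        exact dvd_add hπh ⟨C g.leadingCoeff * X ^ e, by ring⟩
      rcases hπ.2.2 _ _ hdvd with hc | hgd
      · exfalso
        have hlc0 : π.leadingCoeff ≠ 0 := leadingCoeff_ne_zero.mpr hπ0
        have := natDegree_le_of_dvd hc (by simpa using hlc0)
        simp [natDegree_C] at this
        omega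
      · exact hgd
  refine ⟨π, hπq, le_antisymm ?_ ?_⟩
  · intro g hg
    exact Ideal.mem_span_singleton.mpr (key g.natDegree g hg rfl)
  · rw [Ideal.span_le, Set.singleton_subset_iff]; exact hπq

open Polynomial LaurentPolynomial in
theorem laurentUFD (R : Type) [CommRing R] [IsDomain R] [UniqueFactorizationMonoid R]
    [IsDomain R[T;T⁻¹]] :
    UniqueFactorizationMonoid R[T;T⁻¹] := by
  haveI := LaurentPolynomial.isLocalization (R := R)
  have hrep : ∀ x : R[T;T⁻¹], ∃ (a : R[X]) (n : ℕ), x * T (n : ℤ) = toLaurent a := by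
    intro x
    obtain ⟨⟨a, s⟩, h⟩ := IsLocalization.surj (Submonoid.powers (X : R[X])) x
    dsimp only at h
    obtain ⟨n, hn⟩ := s.2
    refine ⟨a, n, ?_⟩
    have hs : algebraMap R[X] R[T;T⁻¹] ↑s = T (n : ℤ) := by
      rw [← hn, algebraMap_eq_toLaurent, toLaurent_X_pow]
    rw [← algebraMap_eq_toLaurent, ← h, hs]
  have hdvd : ∀ (π : R[X]), Prime π → ¬ (π ∣ X) → ∀ a : R[X],
      toLaurent π ∣ toLaurent a → π ∣ a := by
    rintro π hπ hπX a ⟨c, hc⟩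
    obtain ⟨b, n, hb⟩ := hrep c
    have h1 : toLaurent (a * X ^ n) = toLaurent (π * b) := by
      rw [map_mul, map_mul, toLaurent_X_pow, hc, mul_assoc, hb]
    have h2 : a * X ^ n = π * b := toLaurent_injective h1
    rcases hπ.2.2 a (X ^ n) ⟨b, h2⟩ with h | h
    · exact h
    · exact absurd (hπ.dvd_of_dvd_pow h) hπX
  have hprime : ∀ π : R[X], Prime π → ¬ IsUnit (toLaurent π) → Prime (toLaurent π) := by
    intro π hπ hu
    have hπX : ¬ π ∣ X := by
      intro hdX
      have h1 : toLaurent π ∣ toLaurent X := map_dvd _ hdX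
      rw [toLaurent_X] at h1
      exact hu (isUnit_of_dvd_unit h1 (isUnit_T 1))
    refine ⟨fun h0 => ?_, hu, ?_⟩
    · exact hπ.ne_zero (toLaurent_injective (by simpa using h0))
    · rintro x y ⟨c, hc⟩
      obtain ⟨a, na, ha⟩ := hrep x
      obtain ⟨b, nb, hb⟩ := hrep y
      have h1 : toLaurent π ∣ toLaurent (a * b) := by
        refine ⟨c * T (na : ℤ) * T (nb : ℤ), ?_⟩
        rw [map_mul, ← ha, ← hb]
        rw [show x * T (na : ℤ) * (y * T (nb : ℤ)) = x * y * T (na : ℤ) * T (nb : ℤ) by ring,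
          hc]
        ring
      have h2 : π ∣ a * b := hdvd π hπ hπX _ h1
      rcases hπ.2.2 _ _ h2 with h | h
      · left
        have h3 : toLaurent π ∣ x * T (na : ℤ) := ha ▸ map_dvd toLaurent h
        exact (isUnit_T (na : ℤ)).dvd_mul_right.mp h3
      · right
        have h3 : toLaurent π ∣ y * T (nb : ℤ) := hb ▸ map_dvd toLaurent h
        exact (isUnit_T (nb : ℤ)).dvd_mul_right.mp h3
  have hunitprod : ∀ s : Multiset R[T;T⁻¹], (∀ z ∈ s, IsUnit z) → IsUnit s.prod := by
    intro s
    induction s using Multiset.induction with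
    | empty => simp
    | cons a t IH =>
      intro h
      rw [Multiset.prod_cons]
      exact (h a (Multiset.mem_cons_self a t)).mul
        (IH fun z hz => h z (Multiset.mem_cons_of_mem hz))
  apply UniqueFactorizationMonoid.of_exists_prime_factors
  intro x hx0
  obtain ⟨a, n, ha⟩ := hrep x
  have ha0 : a ≠ 0 := by
    intro h
    rw [h, map_zero] at ha
    rcases mul_eq_zero.mp ha with h' | h'
    · exact hx0 h'
    · exact (isUnit_T (n : ℤ)).ne_zero h'
  obtain ⟨ms, hms, hassoc⟩ := UniqueFactorizationMonoid.exists_prime_factors a ha0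
  classical
  set msl := ms.map (⇑toLaurent) with hmsl
  set good := msl.filter (fun z => ¬ IsUnit z) with hgood
  set bad := msl.filter (fun z => IsUnit z) with hbad
  refine ⟨good, ?_, ?_⟩
  · intro b hb
    rw [hgood, Multiset.mem_filter] at hb
    obtain ⟨hb1, hb2⟩ := hb
    obtain ⟨π, hπm, rfl⟩ := Multiset.mem_map.mp (hmsl ▸ hb1)
    exact hprime π (hms π hπm) hb2
  · have hsplit : bad.prod * good.prod = msl.prod := by
      rw [← Multiset.prod_add, hbad, hgood, Multiset.filter_add_not]
    have hbadunit : IsUnit bad.prod := by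
      apply hunitprod
      intro z hz
      exact (Multiset.mem_filter.mp (hbad ▸ hz)).2
    have h1 : Associated good.prod msl.prod := by
      rw [← hsplit]
      exact (associated_unit_mul_left good.prod bad.prod hbadunit).symm
    have h2 : msl.prod = toLaurent ms.prod := (map_multiset_prod (toLaurent : R[X] →+* R[T;T⁻¹]) ms).symm
    obtain ⟨u, hu⟩ := hassoc
    have h3 : Associated (toLaurent ms.prod) (toLaurent a) := by
      have : toLaurent ms.prod * toLaurent (↑u : R[X]) = toLaurent a := by
        rw [← map_mul, hu]
      exact this ▸ associated_mul_unit_right _ _ (u.isUnit.map toLaurent)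
    have h4 : Associated (toLaurent a) x := by
      rw [← ha]
      exact associated_mul_unit_left _ _ (isUnit_T (n : ℤ))
    exact ((h1.trans (h2 ▸ Associated.refl msl.prod)).trans h3).trans h4

open LaurentPolynomial
open AddMonoidAlgebra hiding mapDomain

variable (k : ℕ)

/-- The additive equivalence `ℤ^{k+1} ≃ ℤ^k × ℤ` splitting off the last coordinate. -/
def sEquiv : (Fin (k + 1) → ℤ) ≃+ (Fin k → ℤ) × ℤ where
  toFun v := (fun i => v i.castSucc, v (Fin.last k))
  invFun w := Fin.snoc w.1 w.2
  left_inv v := Fin.snoc_init_self v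
  right_inv w := by
    ext i
    · simp [Fin.snoc_castSucc]
    · simp [Fin.snoc_last]
  map_add' v w := rfl

lemma sEquiv_zEmb (v : Fin k → ℤ) : sEquiv k (zEmb (k + 1) v) = (v, 0) := by
  unfold sEquiv zEmb
  refine Prod.ext (funext fun i => ?_) ?_
  · have h : ((i.castSucc : Fin (k+1)) : ℕ) < k + 1 - 1 := i.2
    simp only [AddMonoidHom.coe_mk, ZeroHom.coe_mk, AddEquiv.coe_mk, Equiv.coe_fn_mk]
    show (if h : ((i.castSucc : Fin (k+1)) : ℕ) < k + 1 - 1 then v ⟨(i.castSucc : Fin (k+1)), h⟩ else 0) = v i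
    rw [dif_pos h]
    exact congrArg v (Fin.eta i h)
  · have h : ¬ ((Fin.last k : Fin (k+1)) : ℕ) < k + 1 - 1 := by simp
    simp only [AddMonoidHom.coe_mk, ZeroHom.coe_mk, AddEquiv.coe_mk, Equiv.coe_fn_mk]
    show (if h : ((Fin.last k : Fin (k+1)) : ℕ) < k + 1 - 1 then v ⟨(Fin.last k : Fin (k+1)), h⟩ else 0) = 0
    rw [dif_neg h]

/-- ring hom `Rd k → AddMonoidAlgebra ℤ (ℤ^k × ℤ)` induced by `g ↦ (g, 0)`. -/
noncomputable def iA : Rd k →+* AddMonoidAlgebra ℤ ((Fin k → ℤ) × ℤ) :=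
  AddMonoidAlgebra.mapDomainRingHom ℤ (AddMonoidHom.inl (Fin k → ℤ) ℤ)

lemma iA_single (g : Fin k → ℤ) (b : ℤ) :
    iA k (single g b) = single (g, 0) b :=
  AddMonoidAlgebra.mapDomain_single

/-- the forward map. -/
noncomputable def fwd : AddMonoidAlgebra ℤ ((Fin k → ℤ) × ℤ) →+* LaurentPolynomial (Rd k) :=
  AddMonoidAlgebra.liftNCRingHom (Int.castRingHom _)
    { toFun := fun g => C (single (Multiplicative.toAdd g).1 (1:ℤ)) *
        T (Multiplicative.toAdd g).2
      map_one' := by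
        show C (single (0 : Fin k → ℤ) (1:ℤ)) * T 0 = 1
        rw [T_zero, mul_one, ← AddMonoidAlgebra.one_def, map_one]
      map_mul' := fun x y => by
        show C (single (x.toAdd.1 + y.toAdd.1) (1:ℤ)) * T (x.toAdd.2 + y.toAdd.2) = _
        have h1 : (single (x.toAdd.1 + y.toAdd.1) (1:ℤ) : Rd k) =
            single x.toAdd.1 1 * single y.toAdd.1 1 := by
          rw [AddMonoidAlgebra.single_mul_single, one_mul]
        rw [h1, T_add, map_mul]
        show _ = C (single x.toAdd.1 (1:ℤ)) * T x.toAdd.2 * (C (single y.toAdd.1 (1:ℤ)) * T y.toAdd.2)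
        ring }
    fun _ _ => Commute.all _ _

lemma fwd_single (x : (Fin k → ℤ) × ℤ) (b : ℤ) :
    fwd k (single x b) = C (single x.1 b) * T x.2 := by
  have h : fwd k (single x b) =
      (b : LaurentPolynomial (Rd k)) * (C (single x.1 (1:ℤ)) * T x.2) :=
    AddMonoidAlgebra.liftNC_single _ _ _ _
  rw [h, ← zsmul_eq_mul, ← smul_mul_assoc, ← map_zsmul C b, AddMonoidAlgebra.smul_single,
    smul_eq_mul, mul_one]

/-- the backward map. -/
noncomputable def bwd : LaurentPolynomial (Rd k) →+* AddMonoidAlgebra ℤ ((Fin k → ℤ) × ℤ) :=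
  AddMonoidAlgebra.liftNCRingHom (iA k)
    { toFun := fun n => single ((0 : Fin k → ℤ), Multiplicative.toAdd n) (1:ℤ)
      map_one' := by
        show single ((0:Fin k → ℤ), (0:ℤ)) (1:ℤ) = 1
        rw [show ((0:Fin k → ℤ), (0:ℤ)) = (0 : (Fin k → ℤ) × ℤ) from rfl,
          ← AddMonoidAlgebra.one_def]
      map_mul' := fun x y => by
        show single ((0:Fin k → ℤ), x.toAdd + y.toAdd) (1:ℤ) = _
        show _ = single ((0:Fin k → ℤ), x.toAdd) (1:ℤ) * single ((0:Fin k → ℤ), y.toAdd) (1:ℤ)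
        rw [AddMonoidAlgebra.single_mul_single, one_mul]
        norm_num }
    fun _ _ => Commute.all _ _

lemma bwd_single (n : ℤ) (r : Rd k) :
    bwd k (single n r) = iA k r * single ((0:Fin k → ℤ), n) (1:ℤ) :=
  AddMonoidAlgebra.liftNC_single _ _ _ _

lemma C_eq_single (r : Rd k) : (C r : LaurentPolynomial (Rd k)) = single (0:ℤ) r := rfl

lemma T_eq_single (n : ℤ) : (T n : LaurentPolynomial (Rd k)) = single n (1 : Rd k) := rfl

lemma fwd_iA (r : Rd k) : fwd k (iA k r) = C r := by
  have h : (fwd k).comp (iA k) = (C : Rd k →+* LaurentPolynomial (Rd k)) := by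
    apply AddMonoidAlgebra.ringHom_ext
    · intro b
      rw [RingHom.comp_apply, iA_single, fwd_single]
      show C (single (0:Fin k → ℤ) b) * T 0 = C (single 0 b)
      rw [T_zero, mul_one]
    · intro a
      rw [RingHom.comp_apply, iA_single, fwd_single]
      show C (single a (1:ℤ)) * T 0 = C (single a 1)
      rw [T_zero, mul_one]
  exact RingHom.congr_fun h r

lemma fwd_bwd : (fwd k).comp (bwd k) = RingHom.id (LaurentPolynomial (Rd k)) := by
  apply AddMonoidAlgebra.ringHom_ext
  · intro b
    rw [RingHom.comp_apply, RingHom.id_apply, bwd_single, map_mul, fwd_iA, fwd_single]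
    show C b * (C (single (0: Fin k → ℤ) (1:ℤ)) * T 0) = _
    rw [T_zero, mul_one, ← AddMonoidAlgebra.one_def, map_one, mul_one, C_eq_single]
  · intro a
    rw [RingHom.comp_apply, RingHom.id_apply, bwd_single, map_mul, fwd_iA, map_one, one_mul,
      fwd_single]
    show C (single (0:Fin k → ℤ) (1:ℤ)) * T a = single a 1
    rw [← AddMonoidAlgebra.one_def, map_one, one_mul, T_eq_single]

lemma bwd_fwd : (bwd k).comp (fwd k) = RingHom.id (AddMonoidAlgebra ℤ ((Fin k → ℤ) × ℤ)) := by
  apply AddMonoidAlgebra.ringHom_ext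
  · intro b
    rw [RingHom.comp_apply, RingHom.id_apply, fwd_single]
    show bwd k (C (single (0:Fin k → ℤ) b) * T 0) = _
    rw [T_zero, mul_one, C_eq_single, bwd_single, iA_single,
      AddMonoidAlgebra.single_mul_single, mul_one]
    show single ((0:Fin k → ℤ) + 0, (0:ℤ) + 0) b = _
    norm_num
    rfl
  · rintro ⟨g, n⟩
    rw [RingHom.comp_apply, RingHom.id_apply, fwd_single]
    rw [map_mul, C_eq_single, bwd_single, iA_single, T_eq_single, bwd_single, map_one, one_mul,
      AddMonoidAlgebra.single_mul_single, AddMonoidAlgebra.single_mul_single]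
    show single ((g:Fin k → ℤ) + 0 + 0, ((0:ℤ) + 0 + n)) ((1:ℤ) * 1 * 1) = _
    norm_num

/-- the currying ring equivalence. -/
noncomputable def curryE : AddMonoidAlgebra ℤ ((Fin k → ℤ) × ℤ) ≃+* LaurentPolynomial (Rd k) :=
  RingEquiv.ofRingHom (fwd k) (bwd k) (fwd_bwd k) (bwd_fwd k)

/-- the full equivalence `Rd (k+1) ≃+* (Rd k)[T;T⁻¹]`. -/
noncomputable def fullEquiv : Rd (k + 1) ≃+* LaurentPolynomial (Rd k) :=
  ((AddMonoidAlgebra.domCongr ℤ ℤ (sEquiv k)).toRingEquiv).trans (curryE k)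

lemma fullEquiv_incl (x : Rd k) :
    fullEquiv k (laurentIncl (k + 1) x) = C x := by
  have h : (fullEquiv k : Rd (k+1) →+* LaurentPolynomial (Rd k)).comp (laurentIncl (k + 1)) =
      (C : Rd k →+* LaurentPolynomial (Rd k)) := by
    apply AddMonoidAlgebra.ringHom_ext
    · intro b
      rw [RingHom.comp_apply]
      show fullEquiv k (AddMonoidAlgebra.mapDomain (zEmb (k+1)) (single 0 b)) = _
      rw [AddMonoidAlgebra.mapDomain_single, map_zero]
      show curryE k ((AddMonoidAlgebra.domCongr ℤ ℤ (sEquiv k)) (single 0 b)) = _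
      rw [AddMonoidAlgebra.domCongr_single, map_zero]
      show fwd k (single 0 b) = _
      rw [fwd_single]
      show C (single (0:Fin k → ℤ) b) * T 0 = _
      rw [T_zero, mul_one]
    · intro a
      rw [RingHom.comp_apply]
      show fullEquiv k (AddMonoidAlgebra.mapDomain (zEmb (k+1)) (single a 1)) = _
      rw [AddMonoidAlgebra.mapDomain_single]
      show curryE k ((AddMonoidAlgebra.domCongr ℤ ℤ (sEquiv k)) (single (zEmb (k+1) a) 1)) = _
      rw [AddMonoidAlgebra.domCongr_single, sEquiv_zEmb]
      show fwd k (single (a, 0) 1) = _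
      rw [fwd_single]
      show C ((single a (1:ℤ) : Rd k)) * T 0 = _
      rw [T_zero, mul_one]
  exact RingHom.congr_fun h x

noncomputable def zeroEquiv : Rd 0 ≃+* ℤ := by
  refine RingEquiv.ofRingHom
    (AddMonoidAlgebra.liftNCRingHom (RingHom.id ℤ) (1 : Multiplicative (Fin 0 → ℤ) →* ℤ)
      (fun _ _ => Commute.all _ _))
    (AddMonoidAlgebra.singleZeroRingHom) (Subsingleton.elim _ _) ?_
  apply AddMonoidAlgebra.ringHom_ext
  · intro b
    rw [RingHom.comp_apply]
    erw [AddMonoidAlgebra.liftNC_single]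
    simp [AddMonoidAlgebra.singleZeroRingHom, AddMonoidAlgebra.intCast_def]
  · intro a
    have ha : a = 0 := Subsingleton.elim _ _
    subst ha
    rw [RingHom.comp_apply]
    rw [show ((single (0 : Fin 0 → ℤ) (1:ℤ)) : Rd 0) = 1 from (AddMonoidAlgebra.one_def).symm]
    simp

theorem ufdRd : (n : ℕ) → UniqueFactorizationMonoid (Rd n)
  | 0 => (zeroEquiv.symm.toMulEquiv).uniqueFactorizationMonoid inferInstance
  | (n+1) => by
    haveI := ufdRd n
    haveI : IsDomain ((Rd n)[T;T⁻¹]) := NoZeroDivisors.to_isDomain _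
    exact ((fullEquiv n).symm.toMulEquiv).uniqueFactorizationMonoid (laurentUFD (Rd n))

/-- For `d ≥ 1`, a nonzero non-principal prime ideal `p ⊂ R_d`
has nonzero intersection with the subring `R_{d-1} ⊂ R_d` (the image of the Laurent
polynomial ring in the first `d − 1` variables under the natural inclusion). -/
theorem stmt3 (d : ℕ) (hd : 1 ≤ d) (p : Ideal (Rd d)) (hp : p.IsPrime)
    (hbot : p ≠ ⊥) (hnp : ¬p.IsPrincipal) :
    ∃ f : Rd d, f ≠ 0 ∧ f ∈ p ∧ f ∈ (laurentIncl d).range := by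
  by_contra hcon
  push_neg at hcon
  obtain ⟨k, rfl⟩ : ∃ k, d = k + 1 := ⟨d - 1, (Nat.succ_pred_eq_of_pos hd).symm⟩
  haveI := ufdRd k
  haveI : IsDomain ((Rd k)[T;T⁻¹]) := NoZeroDivisors.to_isDomain _
  haveI := hp
  haveI := LaurentPolynomial.isLocalization (R := Rd k)
  set Φ := fullEquiv k with hΦ
  set q' : Ideal ((Rd k)[T;T⁻¹]) := Ideal.comap (Φ.symm : (Rd k)[T;T⁻¹] →+* Rd (k+1)) p with hq'def
  haveI hq' : q'.IsPrime := Ideal.IsPrime.comap _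
  have hmemq' : ∀ x : (Rd k)[T;T⁻¹], x ∈ q' ↔ Φ.symm x ∈ p := fun x => Iff.rfl
  have hq'C : ∀ r : Rd k, C r ∈ q' → r = 0 := by
    intro r hr
    by_contra hr0
    have h1 : Φ.symm (C r) = laurentIncl (k+1) r := by
      rw [← fullEquiv_incl k r, ← hΦ, RingEquiv.symm_apply_apply]
    have h2 : laurentIncl (k+1) r ∈ p := by
      rw [hmemq'] at hr
      rw [← h1]; exact hr
    have h3 : laurentIncl (k+1) r ≠ 0 := by
      intro h0
      apply hr0
      have h4 := congrArg Φ h0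
      rw [fullEquiv_incl k r, map_zero] at h4
      exact AddMonoidAlgebra.single_eq_zero.mp (h4 : single (0:ℤ) r = 0)
    exact hcon _ h3 h2 ⟨r, rfl⟩
  set q : Ideal (Polynomial (Rd k)) :=
    Ideal.comap (algebraMap (Polynomial (Rd k)) ((Rd k)[T;T⁻¹])) q' with hqdef
  haveI hq : q.IsPrime := Ideal.IsPrime.comap _
  have hmap : Ideal.map (algebraMap (Polynomial (Rd k)) ((Rd k)[T;T⁻¹])) q = q' :=
    IsLocalization.map_comap (Submonoid.powers (Polynomial.X : Polynomial (Rd k))) _ q'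
  have hq0 : q ≠ ⊥ := by
    intro h0
    rw [h0, Ideal.map_bot] at hmap
    obtain ⟨x, hxp, hx0⟩ := Submodule.exists_mem_ne_zero_of_ne_bot hbot
    have hxq' : Φ x ∈ q' := by
      rw [hmemq', RingEquiv.symm_apply_apply]; exact hxp
    rw [← hmap] at hxq'
    simp only [Ideal.mem_bot] at hxq'
    exact hx0 (by simpa using congrArg Φ.symm hxq')
  have hqR : ∀ r : Rd k, Polynomial.C r ∈ q → r = 0 := by
    intro r hr
    apply hq'C r
    have h5 : algebraMap (Polynomial (Rd k)) ((Rd k)[T;T⁻¹]) (Polynomial.C r) = C r := by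
      rw [algebraMap_eq_toLaurent, Polynomial.toLaurent_C]
    rw [hqdef, Ideal.mem_comap, h5] at hr
    exact hr
  obtain ⟨π, hπq, hspan⟩ := polyPrincipal (Rd k) q hq hq0 hqR
  set g : (Rd k)[T;T⁻¹] := algebraMap (Polynomial (Rd k)) ((Rd k)[T;T⁻¹]) π with hgdef
  have hq'span : q' = Ideal.span {g} := by
    rw [← hmap, hspan, Ideal.map_span, Set.image_singleton]
  apply hnp
  refine ⟨⟨Φ.symm g, ?_⟩⟩
  have hfinal : ∀ x : Rd (k+1), x ∈ p ↔ Φ.symm g ∣ x := by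
    intro x
    have h1 : x ∈ p ↔ Φ x ∈ q' := by rw [hmemq', RingEquiv.symm_apply_apply]
    rw [h1, hq'span, Ideal.mem_span_singleton]
    constructor
    · intro h
      have h2 : Φ.symm g ∣ Φ.symm (Φ x) := map_dvd (Φ.symm : (Rd k)[T;T⁻¹] →+* Rd (k+1)) h
      rwa [RingEquiv.symm_apply_apply] at h2
    · intro h
      have h2 : Φ (Φ.symm g) ∣ Φ x := map_dvd (Φ : Rd (k+1) →+* (Rd k)[T;T⁻¹]) h
      rwa [RingEquiv.apply_symm_apply] at h2
  ext x
  rw [Ideal.submodule_span_eq, Ideal.mem_span_singleton]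
  exact (hfinal x)
end

section
/- Let G be a compact metrizable abelian group equipped with a translation-invariant compatible metric ρ, and let T : G → G be a continuous group automorphism with finite topological entropy h_top(T) < ∞. Then T is asymptotically h-expansive: sup_{y ∈ G} h_top(T, A_t(y)) → 0 as t → 0⁺, where A_t(y) = {z ∈ G : ρ(T^k z, T^k y) ≤ t for all k ≥ 0}. -/
open Filter ENNReal

noncomputable section

/-- The Bowen metric `d_n(x,y) = max_{0 ≤ k ≤ n} ρ(T^k x, T^k y)`. -/
def bowenDist {G : Type} [MetricSpace G] (T : G → G) (n : ℕ) (x y : G) : ℝ :=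
  (Finset.range (n + 1)).sup' Finset.nonempty_range_add_one
    fun k => dist (T^[k] x) (T^[k] y)

/-- `S_n(C, ε)`: the largest cardinality of an `ε`-separated subset of `C` with respect
to the Bowen metric `d_n` (as an extended nonnegative real; it is finite when the ambient
space is compact). -/
def sepCount {G : Type} [MetricSpace G] (T : G → G) (C : Set G) (n : ℕ) (ε : ℝ) : ℝ≥0∞ :=
  ⨆ (F : Finset G) (_ : ↑F ⊆ C ∧
    ∀ x ∈ F, ∀ y ∈ F, x ≠ y → ε ≤ bowenDist T n x y), (F.card : ℝ≥0∞)

/-- `S(C, ε) = limsup_n (1/n) log S_n(C, ε)`. -/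
def sepEntropy {G : Type} [MetricSpace G] (T : G → G) (C : Set G) (ε : ℝ) : ℝ≥0∞ :=
  Filter.limsup
    (fun n : ℕ => ENNReal.ofReal (Real.log (sepCount T C n ε).toReal / n)) Filter.atTop

/-- The topological entropy of `T` on the subset `C`,
`h_top(T, C) = lim_{ε → 0⁺} S(C, ε)`; since `S(C, ε)` is antitone in `ε`, this limit
equals the supremum over `ε > 0`. -/
def topEntropyOn {G : Type} [MetricSpace G] (T : G → G) (C : Set G) : ℝ≥0∞ :=
  ⨆ (ε : ℝ) (_ : 0 < ε), sepEntropy T C ε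

end

noncomputable section Aux
namespace Stmt8

variable {G : Type} [MetricSpace G]

/-- separation predicate -/
def Sep {G : Type} [MetricSpace G] (T : G → G) (C : Set G) (n : ℕ) (ε : ℝ) (F : Finset G) : Prop :=
  ↑F ⊆ C ∧ ∀ x ∈ F, ∀ y ∈ F, x ≠ y → ε ≤ bowenDist T n x y

lemma sepCount_eq (T : G → G) (C : Set G) (n : ℕ) (ε : ℝ) :
    sepCount T C n ε = ⨆ (F : Finset G) (_ : Sep T C n ε F), (F.card : ℝ≥0∞) := rfl

lemma dist_le_bowenDist (T : G → G) {k n : ℕ} (hk : k ≤ n) (x y : G) :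
    dist (T^[k] x) (T^[k] y) ≤ bowenDist T n x y :=
  Finset.le_sup' (fun k => dist (T^[k] x) (T^[k] y))
    (Finset.mem_range.2 (Nat.lt_succ_of_le hk))

lemma bowenDist_nonneg (T : G → G) (n : ℕ) (x y : G) : 0 ≤ bowenDist T n x y :=
  le_trans dist_nonneg (dist_le_bowenDist T (Nat.zero_le n) x y)

lemma bowenDist_le (T : G → G) {n : ℕ} {x y : G} {c : ℝ}
    (h : ∀ k ≤ n, dist (T^[k] x) (T^[k] y) ≤ c) : bowenDist T n x y ≤ c :=
  Finset.sup'_le _ _ fun k hk => h k (Nat.lt_succ_iff.1 (Finset.mem_range.1 hk))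

lemma bowenDist_self (T : G → G) (n : ℕ) (x : G) : bowenDist T n x x = 0 :=
  le_antisymm (bowenDist_le T fun k _ => by simp) (bowenDist_nonneg T n x x)

lemma bowenDist_symm (T : G → G) (n : ℕ) (x y : G) :
    bowenDist T n x y = bowenDist T n y x := by
  unfold bowenDist
  exact Finset.sup'_congr _ rfl fun k _ => dist_comm _ _

lemma bowenDist_triangle (T : G → G) (n : ℕ) (x y z : G) :
    bowenDist T n x z ≤ bowenDist T n x y + bowenDist T n y z :=
  bowenDist_le T fun k hk => le_trans (dist_triangle _ _ _)
    (add_le_add (dist_le_bowenDist T hk x y) (dist_le_bowenDist T hk y z))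

lemma bowenDist_mono (T : G → G) {n n' : ℕ} (h : n ≤ n') (x y : G) :
    bowenDist T n x y ≤ bowenDist T n' x y :=
  bowenDist_le T fun k hk => dist_le_bowenDist T (le_trans hk h) x y

lemma card_le_sepCount {T : G → G} {C : Set G} {n : ℕ} {ε : ℝ} {F : Finset G}
    (hF : Sep T C n ε F) : (F.card : ℝ≥0∞) ≤ sepCount T C n ε :=
  le_iSup₂ (f := fun (F : Finset G) (_ : Sep T C n ε F) => (F.card : ℝ≥0∞)) F hF

lemma sepCount_le {T : G → G} {C : Set G} {n : ℕ} {ε : ℝ} {a : ℝ≥0∞}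
    (h : ∀ F : Finset G, Sep T C n ε F → (F.card : ℝ≥0∞) ≤ a) :
    sepCount T C n ε ≤ a := iSup₂_le h

lemma one_le_sepCount {T : G → G} {C : Set G} {n : ℕ} {ε : ℝ} (hC : C.Nonempty) :
    1 ≤ sepCount T C n ε := by
  obtain ⟨c, hc⟩ := hC
  have := card_le_sepCount (T := T) (n := n) (ε := ε) (F := {c})
    ⟨by simpa using hc, by simp⟩
  simpa using this

lemma sepCount_mono_set {T : G → G} {C C' : Set G} (h : C ⊆ C') {n : ℕ} {ε : ℝ} :
    sepCount T C n ε ≤ sepCount T C' n ε :=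
  sepCount_le fun F hF => card_le_sepCount ⟨hF.1.trans h, hF.2⟩

lemma sepCount_anti_eps {T : G → G} {C : Set G} {n : ℕ} {ε ε' : ℝ} (h : ε ≤ ε') :
    sepCount T C n ε' ≤ sepCount T C n ε :=
  sepCount_le fun F hF => card_le_sepCount
    ⟨hF.1, fun x hx y hy hxy => le_trans h (hF.2 x hx y hy hxy)⟩

lemma sepCount_mono_n {T : G → G} {C : Set G} {n n' : ℕ} (h : n ≤ n') {ε : ℝ} :
    sepCount T C n ε ≤ sepCount T C n' ε :=
  sepCount_le fun F hF => card_le_sepCount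
    ⟨hF.1, fun x hx y hy hxy => le_trans (hF.2 x hx y hy hxy) (bowenDist_mono T h x y)⟩


section Compact
variable {G : Type} [MetricSpace G] [CompactSpace G]

lemma exists_card_bound (T : G → G) (hT : Continuous T) (n : ℕ) {ε : ℝ} (hε : 0 < ε) :
    ∃ N : ℕ, ∀ F : Finset G,
      (∀ x ∈ F, ∀ y ∈ F, x ≠ y → ε ≤ bowenDist T n x y) → F.card ≤ N := by
  set U : G → Set G := fun x => {y | ∀ k ≤ n, dist (T^[k] x) (T^[k] y) < ε / 2} with hU
  have hUopen : ∀ x, IsOpen (U x) := by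
    intro x
    have : U x = ⋂ k ∈ Finset.range (n + 1),
        {y | dist (T^[k] x) (T^[k] y) < ε / 2} := by
      ext y
      simp [hU, Nat.lt_succ_iff]
    rw [this]
    refine isOpen_biInter_finset fun k _ => ?_
    have hck : Continuous fun y => dist (T^[k] x) (T^[k] y) :=
      Continuous.dist continuous_const ((hT.iterate k))
    exact isOpen_lt hck continuous_const
  have hmem : ∀ x : G, x ∈ U x := fun x k _ => by simp [hε]
  obtain ⟨t, ht⟩ := IsCompact.elim_finite_subcover isCompact_univ U hUopen
    (fun x _ => Set.mem_iUnion.2 ⟨x, hmem x⟩)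
  refine ⟨t.card, fun F hF => ?_⟩
  have hex : ∀ a : G, ∃ x ∈ t, a ∈ U x := by
    intro a
    have := ht (Set.mem_univ a)
    simpa using this
  set f : G → G := fun a => (hex a).choose with hf
  have hft : ∀ a, f a ∈ t := fun a => (hex a).choose_spec.1
  have hfU : ∀ a, a ∈ U (f a) := fun a => (hex a).choose_spec.2
  refine Finset.card_le_card_of_injOn f (fun a _ => hft a) ?_
  intro a ha b hb hab
  by_contra hne
  have h1 : bowenDist T n a b < ε := by
    rw [show bowenDist T n a b = (Finset.range (n + 1)).sup' Finset.nonempty_range_add_one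
      (fun k => dist (T^[k] a) (T^[k] b)) from rfl]
    refine (Finset.sup'_lt_iff _).2 fun k hk => ?_
    have hk' : k ≤ n := Nat.lt_succ_iff.1 (Finset.mem_range.1 hk)
    have h2 := hfU a k hk'
    have h3 := hfU b k hk'
    rw [← hab] at h3
    calc dist (T^[k] a) (T^[k] b)
        ≤ dist (T^[k] a) (T^[k] (f a)) + dist (T^[k] (f a)) (T^[k] b) := dist_triangle _ _ _
      _ < ε / 2 + ε / 2 := add_lt_add (by rw [dist_comm]; exact h2) h3
      _ = ε := by ring
  exact absurd (hF a ha b hb hne) (not_le.2 h1)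


lemma exists_of_le_bowenDist {T : G → G} {n : ℕ} {x y : G} {c : ℝ}
    (h : c ≤ bowenDist T n x y) : ∃ k ≤ n, c ≤ dist (T^[k] x) (T^[k] y) := by
  have h' : c ≤ (Finset.range (n + 1)).sup' Finset.nonempty_range_add_one
      (fun k => dist (T^[k] x) (T^[k] y)) := h
  obtain ⟨k, hk, hc⟩ := (Finset.le_sup'_iff _).1 h'
  exact ⟨k, Nat.lt_succ_iff.1 (Finset.mem_range.1 hk), hc⟩

lemma sepCount_ne_top (T : G → G) (hT : Continuous T) (C : Set G) (n : ℕ) {ε : ℝ}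
    (hε : 0 < ε) : sepCount T C n ε ≠ ⊤ := by
  obtain ⟨N, hN⟩ := exists_card_bound T hT n hε
  have : sepCount T C n ε ≤ (N : ℝ≥0∞) :=
    sepCount_le fun F hF => Nat.cast_le.2 (hN F hF.2)
  exact ne_top_of_le_ne_top (ENNReal.natCast_ne_top N) this

lemma exists_maximal_sep (T : G → G) (hT : Continuous T) (n : ℕ) {ε : ℝ} (hε : 0 < ε) :
    ∃ F : Finset G, Sep T Set.univ n ε F ∧ ∀ x : G, ∃ y ∈ F, bowenDist T n y x < ε := by
  classical
  obtain ⟨N, hN⟩ := exists_card_bound T hT n hε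
  set S : Set ℕ := {c | ∃ F : Finset G, Sep T Set.univ n ε F ∧ F.card = c} with hS
  have h0 : 0 ∈ S := ⟨∅, ⟨by simp [Sep], by simp⟩, by simp⟩
  have hbdd : BddAbove S := ⟨N, fun c hc => by
    obtain ⟨F, hF, hcard⟩ := hc
    exact hcard ▸ hN F hF.2⟩
  obtain ⟨F, hF, hcard⟩ := Nat.sSup_mem ⟨0, h0⟩ hbdd
  refine ⟨F, hF, fun x => ?_⟩
  by_contra hcon
  push_neg at hcon
  have hx : x ∉ F := by
    intro hx
    have := hcon x hx
    rw [bowenDist_self] at this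
    exact absurd this (not_le.2 hε)
  have hsep : Sep T Set.univ n ε (insert x F) := by
    refine ⟨by simp, fun a ha b hb hab => ?_⟩
    rcases Finset.mem_insert.1 ha with rfl | ha' <;>
      rcases Finset.mem_insert.1 hb with rfl | hb'
    · exact absurd rfl hab
    · exact (bowenDist_symm T n b a) ▸ hcon b hb'
    · exact hcon a ha'
    · exact hF.2 a ha' b hb' hab
  have hle : (insert x F).card ≤ sSup S := le_csSup hbdd ⟨insert x F, hsep, rfl⟩
  rw [Finset.card_insert_of_notMem hx, hcard] at hle
  omega

lemma sepCount_block (T : G → G) (hT : Continuous T) {m q n : ℕ} {ε : ℝ} (hε : 0 < ε)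
    (hn : n + 1 ≤ q * (m + 1)) :
    sepCount T Set.univ n ε ≤ (sepCount T Set.univ m (ε / 3)) ^ q := by
  have hε3 : (0:ℝ) < ε / 3 := by positivity
  obtain ⟨Fm, hFm, hspan⟩ := exists_maximal_sep T hT m hε3
  refine sepCount_le fun F hF => ?_
  set φ : G → (Fin q → G) := fun a j => (hspan (T^[(j : ℕ) * (m+1)] a)).choose with hφ
  have hφmem : ∀ a j, φ a j ∈ Fm := fun a j => (hspan _).choose_spec.1
  have hφlt : ∀ a (j : Fin q),
      bowenDist T m (φ a j) (T^[(j:ℕ)*(m+1)] a) < ε/3 := fun a j => (hspan _).choose_spec.2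
  have hcard : F.card ≤ Fm.card ^ q := by
    have hle : F.card ≤ (Fintype.piFinset (fun _ : Fin q => Fm)).card := by
      refine Finset.card_le_card_of_injOn φ
        (fun a _ => Fintype.mem_piFinset.2 fun j => hφmem a j) ?_
      intro a ha b hb hab
      by_contra hne
      obtain ⟨k, hkn, hdk⟩ := exists_of_le_bowenDist (hF.2 a ha b hb hne)
      set j : ℕ := k / (m+1) with hjdef
      set i : ℕ := k % (m+1) with hidef
      have hj : j < q := Nat.div_lt_iff_lt_mul (Nat.succ_pos m) |>.2
        (lt_of_lt_of_le (Nat.lt_succ_of_le hkn) hn)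
      have hi : i ≤ m := Nat.lt_succ_iff.1 (Nat.mod_lt _ (Nat.succ_pos m))
      have hksplit : i + j * (m+1) = k := by
        rw [hidef, hjdef, mul_comm]
        exact Nat.mod_add_div k (m+1)
      have hiter : ∀ c : G, T^[k] c = T^[i] (T^[j*(m+1)] c) := fun c => by
        rw [← Function.iterate_add_apply, hksplit]
      let jq : Fin q := ⟨j, hj⟩
      have hyab : φ a jq = φ b jq := congrFun hab jq
      have h2 : dist (T^[i] (φ a jq)) (T^[i] (T^[j*(m+1)] a)) < ε/3 :=
        lt_of_le_of_lt (dist_le_bowenDist T hi _ _) (hφlt a jq)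
      have h3 : dist (T^[i] (φ a jq)) (T^[i] (T^[j*(m+1)] b)) < ε/3 := by
        rw [hyab]
        exact lt_of_le_of_lt (dist_le_bowenDist T hi _ _) (hφlt b jq)
      have : dist (T^[k] a) (T^[k] b) < ε := by
        rw [hiter a, hiter b]
        calc dist (T^[i] (T^[j*(m+1)] a)) (T^[i] (T^[j*(m+1)] b))
            ≤ dist (T^[i] (T^[j*(m+1)] a)) (T^[i] (φ a jq))
              + dist (T^[i] (φ a jq)) (T^[i] (T^[j*(m+1)] b)) := dist_triangle _ _ _
          _ < ε/3 + ε/3 := add_lt_add (by rw [dist_comm]; exact h2) h3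
          _ < ε := by linarith
      exact absurd hdk (not_le.2 this)
    calc F.card ≤ (Fintype.piFinset (fun _ : Fin q => Fm)).card := hle
      _ = Fm.card ^ q := by simp [Fintype.card_piFinset]
  calc (F.card : ℝ≥0∞) ≤ ((Fm.card : ℝ≥0∞)) ^ q := by exact_mod_cast hcard
    _ ≤ (sepCount T Set.univ m (ε / 3)) ^ q :=
        pow_le_pow_left' (card_le_sepCount hFm) q

end Compact


section Group
variable {G : Type} [MetricSpace G] [AddCommGroup G]

/-- `A_t(y)`. -/
def ASet (T : G → G) (t : ℝ) (y : G) : Set G :=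
  {z : G | ∀ k : ℕ, dist (T^[k] z) (T^[k] y) ≤ t}

lemma iterate_map_add' (T : G ≃+ G) (k : ℕ) (x y : G) :
    (⇑T)^[k] (x + y) = (⇑T)^[k] x + (⇑T)^[k] y := by
  induction k with
  | zero => simp
  | succ k ih =>
      rw [Function.iterate_succ_apply', Function.iterate_succ_apply',
        Function.iterate_succ_apply', ih, map_add]

lemma iterate_map_zero' (T : G ≃+ G) (k : ℕ) : (⇑T)^[k] (0 : G) = 0 := by
  induction k with
  | zero => rfl
  | succ k ih => rw [Function.iterate_succ_apply', ih, map_zero]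

variable (hinv : ∀ x y z : G, dist (x + z) (y + z) = dist x y)
include hinv

lemma bowenDist_add_right (T : G ≃+ G) (n : ℕ) (x y z : G) :
    bowenDist (⇑T) n (x + z) (y + z) = bowenDist (⇑T) n x y := by
  unfold bowenDist
  refine Finset.sup'_congr _ rfl fun k _ => ?_
  rw [iterate_map_add', iterate_map_add', hinv]

omit hinv in
lemma bowen_le_of_memASet {T : G ≃+ G} {t : ℝ} {z : G} (hz : z ∈ ASet (⇑T) t 0)
    (n : ℕ) : bowenDist (⇑T) n z 0 ≤ t := by
  refine bowenDist_le _ fun k _ => ?_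
  exact hz k

omit hinv in
lemma mem_ASet_zero (T : G ≃+ G) {t : ℝ} (ht : 0 ≤ t) : (0 : G) ∈ ASet (⇑T) t 0 :=
  fun k => by simp [ht]

omit hinv in
lemma ASet_mono (T : G → G) {t t' : ℝ} (h : t ≤ t') (y : G) :
    ASet T t y ⊆ ASet T t' y := fun z hz k => le_trans (hz k) h

/-- Key product inequality. -/
lemma sepCount_mul_le (T : G ≃+ G) {n : ℕ} {δ ε : ℝ} (hδ : 0 < δ) (hεδ : ε ≤ δ) :
    sepCount (⇑T) (ASet (⇑T) δ 0) n ε * sepCount (⇑T) Set.univ n (5 * δ)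
      ≤ sepCount (⇑T) Set.univ n ε := by
  classical
  have key : ∀ E F : Finset G, Sep (⇑T) (ASet (⇑T) δ 0) n ε E →
      Sep (⇑T) Set.univ n (5 * δ) F →
      (E.card : ℝ≥0∞) * (F.card : ℝ≥0∞) ≤ sepCount (⇑T) Set.univ n ε := by
    intro E F hE hF
    set P : Finset G := (F ×ˢ E).image (fun p => p.1 + p.2) with hP
    have hEb : ∀ e ∈ E, bowenDist (⇑T) n e 0 ≤ δ := fun e he =>
      bowen_le_of_memASet (hE.1 he) n
    have hinj : Set.InjOn (fun p : G × G => p.1 + p.2) ↑(F ×ˢ E) := by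
      intro p hp q hq hpq
      simp only [Finset.coe_product, Set.mem_prod, Finset.mem_coe] at hp hq
      by_cases h1 : p.1 = q.1
      · have h2 : p.2 = q.2 := by
          have := hpq
          simp only at this
          rw [h1] at this
          exact add_left_cancel this
        exact Prod.ext h1 h2
      · exfalso
        have h5 : 5 * δ ≤ bowenDist (⇑T) n p.1 q.1 := hF.2 _ hp.1 _ hq.1 h1
        have hb1 : bowenDist (⇑T) n p.1 q.1
            = bowenDist (⇑T) n (p.1 + p.2) (q.1 + p.2) :=
          (bowenDist_add_right hinv T n p.1 q.1 p.2).symm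
        have hb2 : bowenDist (⇑T) n (q.1 + q.2) (q.1 + p.2)
            = bowenDist (⇑T) n q.2 p.2 := by
          rw [add_comm q.1 q.2, add_comm q.1 p.2]
          exact bowenDist_add_right hinv T n q.2 p.2 q.1
        have htri : bowenDist (⇑T) n (p.1 + p.2) (q.1 + p.2)
            ≤ bowenDist (⇑T) n (p.1 + p.2) (q.1 + q.2)
              + bowenDist (⇑T) n (q.1 + q.2) (q.1 + p.2) := bowenDist_triangle _ _ _ _ _
        have hz : bowenDist (⇑T) n (p.1 + p.2) (q.1 + q.2) = 0 := by
          have : p.1 + p.2 = q.1 + q.2 := hpq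
          rw [this, bowenDist_self]
        have h22 : bowenDist (⇑T) n q.2 p.2 ≤ 2 * δ := by
          calc bowenDist (⇑T) n q.2 p.2
              ≤ bowenDist (⇑T) n q.2 0 + bowenDist (⇑T) n 0 p.2 := bowenDist_triangle _ _ _ _ _
            _ ≤ δ + δ := add_le_add (hEb _ hq.2)
                (by rw [bowenDist_symm]; exact hEb _ hp.2)
            _ = 2 * δ := by ring
        rw [hb1] at h5
        linarith [htri, hz ▸ htri]
    have hsep : Sep (⇑T) Set.univ n ε P := by
      refine ⟨by simp, fun u hu v hv huv => ?_⟩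
      obtain ⟨p, hp, rfl⟩ := Finset.mem_image.1 hu
      obtain ⟨q, hq, rfl⟩ := Finset.mem_image.1 hv
      rw [Finset.mem_product] at hp hq
      by_cases h1 : p.1 = q.1
      · have h2 : p.2 ≠ q.2 := fun h => huv (by rw [h1, h])
        have := hE.2 _ hp.2 _ hq.2 h2
        calc ε ≤ bowenDist (⇑T) n p.2 q.2 := this
          _ = bowenDist (⇑T) n (p.2 + p.1) (q.2 + p.1) :=
              (bowenDist_add_right hinv T n p.2 q.2 p.1).symm
          _ = bowenDist (⇑T) n (p.1 + p.2) (q.1 + q.2) := by rw [add_comm p.2 p.1, h1, add_comm q.2 q.1]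
      · have h5 : 5 * δ ≤ bowenDist (⇑T) n p.1 q.1 := hF.2 _ hp.1 _ hq.1 h1
        have hb1 : bowenDist (⇑T) n p.1 q.1
            = bowenDist (⇑T) n (p.1 + p.2) (q.1 + p.2) :=
          (bowenDist_add_right hinv T n p.1 q.1 p.2).symm
        have hb2 : bowenDist (⇑T) n (q.1 + q.2) (q.1 + p.2)
            = bowenDist (⇑T) n q.2 p.2 := by
          rw [add_comm q.1 q.2, add_comm q.1 p.2]
          exact bowenDist_add_right hinv T n q.2 p.2 q.1
        have h22 : bowenDist (⇑T) n q.2 p.2 ≤ 2 * δ := by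
          calc bowenDist (⇑T) n q.2 p.2
              ≤ bowenDist (⇑T) n q.2 0 + bowenDist (⇑T) n 0 p.2 := bowenDist_triangle _ _ _ _ _
            _ ≤ δ + δ := add_le_add (bowen_le_of_memASet (hE.1 hq.2) n)
                (by rw [bowenDist_symm]; exact bowen_le_of_memASet (hE.1 hp.2) n)
            _ = 2 * δ := by ring
        have htri : bowenDist (⇑T) n (p.1 + p.2) (q.1 + p.2)
            ≤ bowenDist (⇑T) n (p.1 + p.2) (q.1 + q.2)
              + bowenDist (⇑T) n (q.1 + q.2) (q.1 + p.2) := bowenDist_triangle _ _ _ _ _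
        have : 3 * δ ≤ bowenDist (⇑T) n (p.1 + p.2) (q.1 + q.2) := by
          rw [hb1] at h5
          rw [hb2] at htri
          linarith
        linarith
    have hcard : P.card = F.card * E.card := by
      rw [hP, Finset.card_image_of_injOn hinj, Finset.card_product]
    have := card_le_sepCount hsep
    rw [hcard] at this
    calc (E.card : ℝ≥0∞) * (F.card : ℝ≥0∞) = ((F.card * E.card : ℕ) : ℝ≥0∞) := by
          push_cast; ring
      _ ≤ sepCount (⇑T) Set.univ n ε := this
  rw [sepCount_eq (⇑T) (ASet (⇑T) δ 0) n ε]
  simp only [ENNReal.iSup_mul]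
  refine iSup₂_le fun E hE => ?_
  rw [sepCount_eq (⇑T) Set.univ n (5 * δ)]
  simp only [ENNReal.mul_iSup]
  exact iSup₂_le fun F hF => key E F hE hF

/-- translation invariance of `sepCount` on the sets `A_t(y)`. -/
lemma sepCount_ASet_le (T : G ≃+ G) (t : ℝ) (y y' : G) (n : ℕ) (ε : ℝ) :
    sepCount (⇑T) (ASet (⇑T) t y) n ε ≤ sepCount (⇑T) (ASet (⇑T) t y') n ε := by
  classical
  refine sepCount_le fun F hF => ?_
  set c := y' - y with hc
  have hinj : Function.Injective (fun a : G => a + c) := add_left_injective c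
  set F' : Finset G := F.image (fun a => a + c) with hF'
  have hcard : F'.card = F.card := Finset.card_image_of_injective _ hinj
  have hsub : ↑F' ⊆ ASet (⇑T) t y' := by
    intro z hz
    simp only [hF', Finset.coe_image, Set.mem_image, Finset.mem_coe] at hz
    obtain ⟨a, ha, rfl⟩ := hz
    intro k
    have hmem := hF.1 ha k
    have hy' : (⇑T)^[k] y' = (⇑T)^[k] y + (⇑T)^[k] c := by
      rw [← iterate_map_add' T k y c, hc, add_sub_cancel]
    rw [iterate_map_add' T k a c, hy', hinv]
    exact hmem
  have hsep : ∀ u ∈ F', ∀ v ∈ F', u ≠ v → ε ≤ bowenDist (⇑T) n u v := by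
    intro u hu v hv huv
    obtain ⟨a, ha, rfl⟩ := Finset.mem_image.1 hu
    obtain ⟨b, hb, rfl⟩ := Finset.mem_image.1 hv
    have hab : a ≠ b := fun h => huv (by rw [h])
    rw [bowenDist_add_right hinv T n a b c]
    exact hF.2 a ha b hb hab
  have := card_le_sepCount (T := ⇑T) (C := ASet (⇑T) t y') (n := n) (ε := ε)
    (F := F') ⟨hsub, hsep⟩
  rw [hcard] at this
  exact this

lemma sepCount_ASet_eq (T : G ≃+ G) (t : ℝ) (y y' : G) (n : ℕ) (ε : ℝ) :
    sepCount (⇑T) (ASet (⇑T) t y) n ε = sepCount (⇑T) (ASet (⇑T) t y') n ε :=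
  le_antisymm (sepCount_ASet_le hinv T t y y' n ε) (sepCount_ASet_le hinv T t y' y n ε)

lemma topEntropyOn_ASet_eq (T : G ≃+ G) (t : ℝ) (y y' : G) :
    topEntropyOn (⇑T) (ASet (⇑T) t y) = topEntropyOn (⇑T) (ASet (⇑T) t y') := by
  unfold topEntropyOn sepEntropy
  congr 1
  ext ε
  congr 1
  ext _
  congr 1
  ext n
  rw [sepCount_ASet_eq hinv T t y y' n ε]

end Group


section Analysis
variable {G : Type} [MetricSpace G] [CompactSpace G]

lemma sepCount_dichotomy (T : G → G) (C : Set G) (n : ℕ) (ε : ℝ) :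
    sepCount T C n ε = 0 ∨ 1 ≤ sepCount T C n ε := by
  rcases C.eq_empty_or_nonempty with rfl | h
  · left
    refine le_antisymm (sepCount_le fun F hF => ?_) zero_le
    have hF0 : F = ∅ := Finset.coe_eq_empty.1 (Set.subset_empty_iff.1 hF.1)
    simp [hF0]
  · right; exact one_le_sepCount h

lemma log_sepCount_nonneg (T : G → G) (C : Set G) (n : ℕ) (ε : ℝ) :
    0 ≤ Real.log (sepCount T C n ε).toReal := by
  rcases sepCount_dichotomy T C n ε with h | h
  · simp [h]
  · rcases eq_or_ne (sepCount T C n ε) ⊤ with h2 | h2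
    · simp [h2]
    · refine Real.log_nonneg ?_
      rw [← ENNReal.toReal_one]
      exact ENNReal.toReal_mono h2 h

lemma log_sepCount_mono {T : G → G} {C C' : Set G} {n n' : ℕ} {ε ε' : ℝ}
    (h : sepCount T C n ε ≤ sepCount T C' n' ε') (h' : sepCount T C' n' ε' ≠ ⊤) :
    Real.log (sepCount T C n ε).toReal ≤ Real.log (sepCount T C' n' ε').toReal := by
  rcases sepCount_dichotomy T C n ε with h0 | h1
  · rw [h0]; simpa using log_sepCount_nonneg T C' n' ε'
  · have hne : sepCount T C n ε ≠ ⊤ := ne_top_of_le_ne_top h' h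
    have h1' : (1:ℝ) ≤ (sepCount T C n ε).toReal := by
      rw [← ENNReal.toReal_one]; exact ENNReal.toReal_mono hne h1
    exact Real.log_le_log (by linarith) (ENNReal.toReal_mono h' h)

lemma sepEntropy_le_of_eventually {T : G → G} {C : Set G} {ε : ℝ} {c : ℝ}
    (h : ∀ᶠ n : ℕ in Filter.atTop, Real.log (sepCount T C n ε).toReal / n ≤ c) :
    sepEntropy T C ε ≤ ENNReal.ofReal c :=
  Filter.limsup_le_of_le (h := h.mono fun n hn => ENNReal.ofReal_le_ofReal hn)

lemma sepEntropy_le_sepEntropy {T : G → G} {C C' : Set G} {ε ε' : ℝ}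
    (hC : C ⊆ C') (hε : ε' ≤ ε) (hne : ∀ n, sepCount T C' n ε' ≠ ⊤) :
    sepEntropy T C ε ≤ sepEntropy T C' ε' := by
  refine Filter.limsup_le_limsup (Filter.Eventually.of_forall fun n => ?_)
  refine ENNReal.ofReal_le_ofReal ?_
  have hcount : sepCount T C n ε ≤ sepCount T C' n ε' :=
    le_trans (sepCount_mono_set hC) (sepCount_anti_eps hε)
  have hlog := log_sepCount_mono hcount (hne n)
  rw [div_eq_mul_inv, div_eq_mul_inv]
  exact mul_le_mul_of_nonneg_right hlog (by positivity)

lemma topEntropyOn_mono_set (T : G → G) (hT : Continuous T) {C C' : Set G} (hC : C ⊆ C') :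
    topEntropyOn T C ≤ topEntropyOn T C' := by
  simp only [topEntropyOn]
  refine iSup₂_le fun ε hε => ?_
  refine le_trans (sepEntropy_le_sepEntropy hC le_rfl fun n => sepCount_ne_top T hT C' n hε) ?_
  exact le_iSup₂ (f := fun (ε : ℝ) (_ : 0 < ε) => sepEntropy T C' ε) ε hε

lemma sepEntropy_univ_le (T : G → G) (hT : Continuous T) [Nonempty G] {ε : ℝ}
    (hε : 0 < ε) (m : ℕ) :
    sepEntropy T Set.univ ε
      ≤ ENNReal.ofReal (Real.log (sepCount T Set.univ m (ε/3)).toReal / (m+1)) := by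
  set L : ℝ := Real.log (sepCount T Set.univ m (ε/3)).toReal with hL
  have hLnn : 0 ≤ L := log_sepCount_nonneg _ _ _ _
  refine ENNReal.le_of_forall_pos_le_add fun θ hθ _ => ?_
  have h1 : sepEntropy T Set.univ ε ≤ ENNReal.ofReal (L/(m+1) + θ) := by
    refine sepEntropy_le_of_eventually ?_
    have hev1 : ∀ᶠ n : ℕ in Filter.atTop, L / n ≤ θ := by
      have h := tendsto_const_div_atTop_nhds_zero_nat L
      exact h.eventually (eventually_le_nhds (by exact_mod_cast hθ))
    filter_upwards [hev1, Filter.eventually_ge_atTop 1] with n hn hn1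
    have hn0 : (0:ℝ) < n := by exact_mod_cast hn1
    set q : ℕ := n / (m+1) + 1 with hq
    have hside : n + 1 ≤ q * (m+1) := by
      have h1' := Nat.div_add_mod n (m+1)
      have h2' : n % (m+1) < m+1 := Nat.mod_lt _ (Nat.succ_pos m)
      rw [hq]
      have h3' : (n/(m+1)+1)*(m+1) = (m+1)*(n/(m+1)) + (m+1) := by ring
      omega
    have hblock := sepCount_block T hT hε hside
    have hfin1 : sepCount T Set.univ m (ε/3) ≠ ⊤ := sepCount_ne_top T hT _ m (by positivity)
    have hfinq : (sepCount T Set.univ m (ε/3)) ^ q ≠ ⊤ := ENNReal.pow_ne_top hfin1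
    have hsnne : sepCount T Set.univ n ε ≠ ⊤ := ne_top_of_le_ne_top hfinq hblock
    have h1s : (1:ℝ) ≤ (sepCount T Set.univ n ε).toReal := by
      rw [← ENNReal.toReal_one]
      exact ENNReal.toReal_mono hsnne (one_le_sepCount ⟨Classical.arbitrary G, Set.mem_univ _⟩)
    have htR : (sepCount T Set.univ n ε).toReal
        ≤ ((sepCount T Set.univ m (ε/3)).toReal) ^ q := by
      rw [← ENNReal.toReal_pow]
      exact ENNReal.toReal_mono hfinq hblock
    have hlog : Real.log (sepCount T Set.univ n ε).toReal ≤ q * L := by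
      calc Real.log (sepCount T Set.univ n ε).toReal
          ≤ Real.log (((sepCount T Set.univ m (ε/3)).toReal) ^ q) :=
            Real.log_le_log (by linarith) htR
        _ = q * L := by rw [Real.log_pow]
    have hqle : (q:ℝ) ≤ (n:ℝ)/(m+1) + 1 := by
      rw [hq]
      push_cast
      have := Nat.cast_div_le (α := ℝ) (m := n) (n := m+1)
      push_cast at this
      linarith
    calc Real.log (sepCount T Set.univ n ε).toReal / n ≤ (q * L) / n := by
          rw [div_eq_mul_inv, div_eq_mul_inv]
          exact mul_le_mul_of_nonneg_right hlog (by positivity)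
      _ ≤ (((n:ℝ)/(m+1) + 1) * L) / n := by
          rw [div_eq_mul_inv, div_eq_mul_inv]
          exact mul_le_mul_of_nonneg_right
            (mul_le_mul_of_nonneg_right hqle hLnn) (by positivity)
      _ = L/(m+1) + L/n := by field_simp
      _ ≤ L/(m+1) + θ := by linarith
  calc sepEntropy T Set.univ ε ≤ ENNReal.ofReal (L/(m+1) + θ) := h1
    _ ≤ ENNReal.ofReal (L/(m+1)) + ENNReal.ofReal θ := ENNReal.ofReal_add_le
    _ = ENNReal.ofReal (L/(m+1)) + θ := by rw [ENNReal.ofReal_coe_nnreal]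

end Analysis


section Main
variable {G : Type} [MetricSpace G] [CompactSpace G] [AddCommGroup G]

lemma main_bound (hinv : ∀ x y z : G, dist (x + z) (y + z) = dist x y)
    (T : G ≃+ G) (hT : Continuous (⇑T)) (hfin : topEntropyOn (⇑T) Set.univ ≠ ⊤)
    {c : ℝ} (hc : 0 < c) :
    ∃ δ : ℝ, 0 < δ ∧ topEntropyOn (⇑T) (ASet (⇑T) δ 0) ≤ ENNReal.ofReal c := by
  haveI : Nonempty G := ⟨0⟩
  set H := topEntropyOn (⇑T) Set.univ with hH
  by_cases hH0 : H = 0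
  · refine ⟨1, one_pos, ?_⟩
    calc topEntropyOn (⇑T) (ASet (⇑T) 1 0) ≤ H :=
          topEntropyOn_mono_set (⇑T) hT (Set.subset_univ _)
      _ = 0 := hH0
      _ ≤ _ := zero_le
  have hc2 : (0:ℝ) < c/2 := by linarith
  have hoc2 : ENNReal.ofReal (c/2) ≠ 0 :=
    fun h => absurd (ENNReal.ofReal_eq_zero.1 h) (not_le.2 hc2)
  have hlt : H - ENNReal.ofReal (c/2) < H := ENNReal.sub_lt_self hfin hH0 hoc2
  obtain ⟨ε₁, hε₁, hKε₁⟩ : ∃ ε₁ : ℝ, 0 < ε₁ ∧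
      H - ENNReal.ofReal (c/2) < sepEntropy (⇑T) Set.univ ε₁ := by
    have h2 : H - ENNReal.ofReal (c/2)
        < ⨆ (ε : ℝ) (_ : 0 < ε), sepEntropy (⇑T) Set.univ ε := hlt
    simp only [lt_iSup_iff] at h2
    obtain ⟨ε₁, hpos, h⟩ := h2
    exact ⟨ε₁, hpos, h⟩
  set δ : ℝ := ε₁ / 15 with hδdef
  have hδ : 0 < δ := by positivity
  have h5δ : 5 * δ = ε₁ / 3 := by rw [hδdef]; ring
  have hHt : H ≠ ⊤ := hfin
  have hLB : ∀ m : ℕ, ((m:ℝ)+1) * (H.toReal - c/2)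
      ≤ Real.log (sepCount (⇑T) Set.univ m (ε₁/3)).toReal := by
    intro m
    set L := Real.log (sepCount (⇑T) Set.univ m (ε₁/3)).toReal with hLd
    have hLnn : 0 ≤ L := log_sepCount_nonneg _ _ _ _
    have h1 : H - ENNReal.ofReal (c/2) < ENNReal.ofReal (L / (m+1)) :=
      lt_of_lt_of_le hKε₁ (sepEntropy_univ_le (⇑T) hT hε₁ m)
    have h2 : (H - ENNReal.ofReal (c/2)).toReal ≤ L / (m+1) := by
      have h3 := ENNReal.toReal_mono ENNReal.ofReal_ne_top h1.le
      rwa [ENNReal.toReal_ofReal (by positivity)] at h3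
    have h3 : H.toReal - c/2 ≤ L/(m+1) := by
      refine le_trans ?_ h2
      have h4 := ENNReal.le_toReal_sub (a := H) (b := ENNReal.ofReal (c/2))
        ENNReal.ofReal_ne_top
      rwa [ENNReal.toReal_ofReal hc2.le] at h4
    have hm1 : (0:ℝ) < (m:ℝ)+1 := by positivity
    calc ((m:ℝ)+1) * (H.toReal - c/2) ≤ ((m:ℝ)+1) * (L/((m:ℝ)+1)) :=
          mul_le_mul_of_nonneg_left h3 hm1.le
      _ = L := by field_simp
  refine ⟨δ, hδ, ?_⟩
  have claim : ∀ ε : ℝ, 0 < ε → ε ≤ δ →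
      sepEntropy (⇑T) (ASet (⇑T) δ 0) ε ≤ ENNReal.ofReal c := by
    intro ε hε hεδ
    have hKH : sepEntropy (⇑T) Set.univ ε ≤ H :=
      le_iSup₂ (f := fun (ε : ℝ) (_ : 0 < ε) => sepEntropy (⇑T) Set.univ ε) ε hε
    have hup : Filter.limsup
        (fun n : ℕ => ENNReal.ofReal (Real.log (sepCount (⇑T) Set.univ n ε).toReal / n))
        Filter.atTop < H + ENNReal.ofReal (c/2) :=
      lt_of_le_of_lt hKH (ENNReal.lt_add_right hHt hoc2)
    have hev := Filter.eventually_lt_of_limsup_lt hup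
    apply sepEntropy_le_of_eventually
    filter_upwards [hev, Filter.eventually_ge_atTop 1] with n hn hn1
    have hn0 : (0:ℝ) < n := by exact_mod_cast hn1
    set s := sepCount (⇑T) Set.univ n ε with hs
    set sA := sepCount (⇑T) (ASet (⇑T) δ 0) n ε with hsA
    set s5 := sepCount (⇑T) Set.univ n (ε₁/3) with hs5
    have hsne : s ≠ ⊤ := sepCount_ne_top _ hT _ n hε
    have hs5ne : s5 ≠ ⊤ := sepCount_ne_top _ hT _ n (by positivity)
    have hlog0 : 0 ≤ Real.log s.toReal := by rw [hs]; exact log_sepCount_nonneg _ _ _ _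
    have hlog5 : 0 ≤ Real.log s5.toReal := by rw [hs5]; exact log_sepCount_nonneg _ _ _ _
    have hsAne : sA ≠ ⊤ := sepCount_ne_top _ hT _ n hε
    have h1A : 1 ≤ sA := one_le_sepCount ⟨0, mem_ASet_zero T hδ.le⟩
    have h15 : 1 ≤ s5 := one_le_sepCount ⟨0, Set.mem_univ 0⟩
    have h1s : 1 ≤ s := one_le_sepCount ⟨0, Set.mem_univ 0⟩
    have hprod : sA * s5 ≤ s := by
      have hp := sepCount_mul_le hinv T hδ hεδ (n := n)
      rwa [h5δ] at hp
    have hAr : (1:ℝ) ≤ sA.toReal := by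
      rw [← ENNReal.toReal_one]; exact ENNReal.toReal_mono hsAne h1A
    have h5r : (1:ℝ) ≤ s5.toReal := by
      rw [← ENNReal.toReal_one]; exact ENNReal.toReal_mono hs5ne h15
    have hsr : (1:ℝ) ≤ s.toReal := by
      rw [← ENNReal.toReal_one]; exact ENNReal.toReal_mono hsne h1s
    have hmul : sA.toReal * s5.toReal ≤ s.toReal := by
      rw [← ENNReal.toReal_mul]; exact ENNReal.toReal_mono hsne hprod
    have hlogs : Real.log sA.toReal + Real.log s5.toReal ≤ Real.log s.toReal := by
      rw [← Real.log_mul (by linarith) (by linarith)]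
      exact Real.log_le_log (by nlinarith) hmul
    have hupn : Real.log s.toReal / n < H.toReal + c/2 := by
      have hX : (H + ENNReal.ofReal (c/2)) ≠ ⊤ :=
        ENNReal.add_ne_top.2 ⟨hHt, ENNReal.ofReal_ne_top⟩
      have h6 := (ENNReal.toReal_lt_toReal ENNReal.ofReal_ne_top hX).2 hn
      rw [ENNReal.toReal_ofReal (div_nonneg hlog0 hn0.le)] at h6
      rwa [ENNReal.toReal_add hHt ENNReal.ofReal_ne_top,
        ENNReal.toReal_ofReal hc2.le] at h6
    have hlow : H.toReal - c/2 ≤ Real.log s5.toReal / n := by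
      have hL := hLB n
      rw [← hs5] at hL
      rcases le_or_gt (H.toReal - c/2) 0 with hx | hx
      · exact le_trans hx (div_nonneg hlog5 hn0.le)
      · rw [le_div_iff₀ hn0]
        nlinarith
    have hfinal : Real.log sA.toReal / n ≤ Real.log s.toReal / n - Real.log s5.toReal / n := by
      rw [div_sub_div_same]
      rw [div_eq_mul_inv, div_eq_mul_inv]
      exact mul_le_mul_of_nonneg_right (by linarith) (by positivity)
    linarith
  simp only [topEntropyOn]
  refine iSup₂_le fun ε hε => ?_
  rcases le_or_gt ε δ with h | h
  · exact claim ε hε h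
  · refine le_trans (sepEntropy_le_sepEntropy (le_refl (ASet (⇑T) δ 0)) h.le
      fun n => sepCount_ne_top _ hT _ n hδ) (claim δ hδ le_rfl)

end Main

end Stmt8
end Aux


/-- Let `G` be a compact metrizable abelian group with a
translation-invariant compatible metric, and `T : G → G` a continuous group automorphism
with finite topological entropy.  Then `T` is asymptotically `h`-expansive:
`sup_{y ∈ G} h_top(T, A_t(y)) → 0` as `t → 0⁺`, where
`A_t(y) = {z : ρ(T^k z, T^k y) ≤ t for all k ≥ 0}`. -/
theorem stmt8 {G : Type} [MetricSpace G] [CompactSpace G] [AddCommGroup G]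
    [IsTopologicalAddGroup G]
    (hinv : ∀ x y z : G, dist (x + z) (y + z) = dist x y)
    (T : G ≃+ G) (hT : Continuous T)
    (hfin : topEntropyOn (⇑T) Set.univ ≠ ⊤) :
    Filter.Tendsto
      (fun t : ℝ =>
        ⨆ y : G, topEntropyOn (⇑T) {z : G | ∀ k : ℕ, dist ((⇑T)^[k] z) ((⇑T)^[k] y) ≤ t})
      (nhdsWithin 0 (Set.Ioi 0)) (nhds 0) := by
  haveI : Nonempty G := ⟨0⟩
  rw [ENNReal.tendsto_nhds_zero]
  intro η hη
  obtain ⟨c, hc, hcη⟩ : ∃ c : ℝ, 0 < c ∧ ENNReal.ofReal c ≤ η := by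
    rcases eq_or_ne η ⊤ with rfl | hη'
    · exact ⟨1, one_pos, le_top⟩
    · exact ⟨η.toReal, ENNReal.toReal_pos hη.ne' hη',
        by rw [ENNReal.ofReal_toReal hη']⟩
  obtain ⟨δ, hδ, hbound⟩ := Stmt8.main_bound hinv T hT hfin hc
  filter_upwards [Ioc_mem_nhdsGT hδ] with t ht
  have hexq : ∀ y : G,
      topEntropyOn (⇑T) {z : G | ∀ k : ℕ, dist ((⇑T)^[k] z) ((⇑T)^[k] y) ≤ t}
        = topEntropyOn (⇑T) (Stmt8.ASet (⇑T) t 0) := fun y =>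
    Stmt8.topEntropyOn_ASet_eq hinv T t y 0
  have h1 : (⨆ y : G, topEntropyOn (⇑T)
        {z : G | ∀ k : ℕ, dist ((⇑T)^[k] z) ((⇑T)^[k] y) ≤ t})
      = topEntropyOn (⇑T) (Stmt8.ASet (⇑T) t 0) := by
    calc (⨆ y : G, topEntropyOn (⇑T)
          {z : G | ∀ k : ℕ, dist ((⇑T)^[k] z) ((⇑T)^[k] y) ≤ t})
        = ⨆ _y : G, topEntropyOn (⇑T) (Stmt8.ASet (⇑T) t 0) := iSup_congr hexq
      _ = _ := iSup_const
  rw [h1]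
  refine le_trans (Stmt8.topEntropyOn_mono_set _ hT
    (Stmt8.ASet_mono (⇑T) ht.2 0)) (le_trans hbound hcη)
end

section
/- Let X and Y be compact metrizable abelian groups, let λ_X be the normalized Haar measure on X, and let f : X → Y be a Borel measurable map. Let C(f) be the set of all h ∈ X such that the map x ↦ f(x + h) − f(x) is λ_X-almost everywhere equal to a constant. Then: (1) C(f) is a closed subgroup of X; and (2) f is λ_X-almost everywhere equal to an affine map if and only if C(f) = X. -/
open MeasureTheory Filter Set
open scoped Topology ENNReal

namespace Stmt11Aux

section RhoY

variable {Y : Type} [MetricSpace Y] [AddCommGroup Y] [IsTopologicalAddGroup Y] [CompactSpace Y]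

/-- An invariant "metric" on a compact metrizable abelian group, obtained by taking the
supremum of translates of the given metric. -/
noncomputable def rho (p q : Y) : ℝ := ⨆ r : Y, dist (p - r) (q - r)

lemma rho_bdd (p q : Y) : BddAbove (Set.range fun r : Y => dist (p - r) (q - r)) := by
  have hc : Continuous fun r : Y => dist (p - r) (q - r) := by fun_prop
  exact (isCompact_range hc).bddAbove

lemma dist_sub_le_rho (p q r : Y) : dist (p - r) (q - r) ≤ rho p q := le_ciSup (rho_bdd p q) r

lemma dist_le_rho (p q : Y) : dist p q ≤ rho p q := by
  simpa using dist_sub_le_rho p q 0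

lemma rho_nonneg (p q : Y) : 0 ≤ rho p q := dist_nonneg.trans (dist_le_rho p q)

lemma rho_le (p q : Y) {c : ℝ} (h : ∀ r : Y, dist (p - r) (q - r) ≤ c) : rho p q ≤ c :=
  ciSup_le h

lemma rho_self (p : Y) : rho p p = 0 :=
  le_antisymm (rho_le _ _ fun r => by simp) (rho_nonneg _ _)

lemma rho_comm (p q : Y) : rho p q = rho q p := by
  unfold rho
  exact congrArg _ (funext fun r => dist_comm _ _)

lemma rho_triangle (p s q : Y) : rho p q ≤ rho p s + rho s q :=
  rho_le _ _ fun r => (dist_triangle _ (s - r) _).trans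
    (add_le_add (dist_sub_le_rho _ _ r) (dist_sub_le_rho _ _ r))

lemma rho_add (p q s : Y) : rho (p + s) (q + s) = rho p q := by
  have h : (fun r : Y => dist (p + s - r) (q + s - r))
      = (fun r : Y => dist (p - r) (q - r)) ∘ fun r : Y => r - s := by
    funext r
    simp only [Function.comp_apply]
    congr 1 <;> abel
  have hsurj : Function.Surjective (fun r : Y => r - s) := fun y => ⟨y + s, add_sub_cancel_right y s⟩
  unfold rho
  rw [iSup, iSup, h, hsurj.range_comp]

lemma rho_sub (p q r : Y) : rho (p - r) (q - r) = rho p q := by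
  simpa [sub_eq_add_neg] using rho_add p q (-r)

lemma rho_small : ∀ ε > (0:ℝ), ∃ δ > (0:ℝ), ∀ p q : Y, dist p q < δ → rho p q ≤ ε := by
  intro ε hε
  have hu : UniformContinuous (fun w : Y × Y × Y => dist (w.1 - w.2.2) (w.2.1 - w.2.2)) :=
    CompactSpace.uniformContinuous_of_continuous (by fun_prop)
  rw [Metric.uniformContinuous_iff] at hu
  obtain ⟨δ, hδ, H⟩ := hu ε hε
  refine ⟨δ, hδ, fun p q hpq => rho_le _ _ fun r => ?_⟩
  have hd : dist ((p, q, r) : Y × Y × Y) ((q, q, r) : Y × Y × Y) < δ := by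
    simp only [Prod.dist_eq, dist_self]
    simpa [max_lt_iff, hδ] using hpq
  have := H hd
  rw [Real.dist_eq] at this
  simp only [sub_self, dist_self, sub_zero] at this
  exact le_of_lt (lt_of_le_of_lt (le_abs_self _) this)

lemma rho_continuous : Continuous fun w : Y × Y => rho w.1 w.2 := by
  rw [Metric.continuous_iff]
  rintro ⟨p, q⟩ ε hε
  obtain ⟨δ, hδ, H⟩ := rho_small (Y := Y) (ε/4) (by linarith)
  refine ⟨δ, hδ, ?_⟩
  rintro ⟨p', q'⟩ hd
  rw [Prod.dist_eq] at hd
  have h1 : rho p' p ≤ ε/4 := H _ _ (lt_of_le_of_lt (le_max_left _ _) hd)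
  have h2 : rho q' q ≤ ε/4 := H _ _ (lt_of_le_of_lt (le_max_right _ _) hd)
  have h1' : rho p p' ≤ ε/4 := by rwa [rho_comm]
  have h2' : rho q q' ≤ ε/4 := by rwa [rho_comm]
  have hA : rho p' q' ≤ rho p q + (ε/4 + ε/4) := by
    calc rho p' q' ≤ rho p' p + rho p q' := rho_triangle _ _ _
    _ ≤ rho p' p + (rho p q + rho q q') := by
        have := rho_triangle p q q'
        linarith
    _ ≤ rho p q + (ε/4 + ε/4) := by linarith
  have hB : rho p q ≤ rho p' q' + (ε/4 + ε/4) := by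
    calc rho p q ≤ rho p p' + rho p' q := rho_triangle _ _ _
    _ ≤ rho p p' + (rho p' q' + rho q' q) := by
        have := rho_triangle p' q' q
        linarith
    _ ≤ rho p' q' + (ε/4 + ε/4) := by linarith
  rw [Real.dist_eq, abs_sub_lt_iff]
  constructor <;> linarith

lemma rho_bound : ∃ M : ℝ, 0 < M ∧ ∀ p q : Y, rho p q ≤ M := by
  obtain ⟨C, hC⟩ := Metric.isBounded_iff.1 (isCompact_univ (X := Y)).isBounded
  refine ⟨max C 0 + 1, by positivity, fun p q => rho_le _ _ fun r => ?_⟩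
  have := hC (mem_univ (p - r)) (mem_univ (q - r))
  have h0 : C ≤ max C 0 := le_max_left _ _
  linarith

end RhoY

section XSide

variable {X Y : Type} [MetricSpace X] [AddCommGroup X] [IsTopologicalAddGroup X]
  [CompactSpace X] [MeasurableSpace X] [BorelSpace X]
  [MetricSpace Y] [AddCommGroup Y] [IsTopologicalAddGroup Y]
  [CompactSpace Y] [MeasurableSpace Y] [BorelSpace Y]
  (lamX : Measure X) [lamX.IsAddHaarMeasure] [IsProbabilityMeasure lamX]

/-- Transfer an a.e. property along a translation. -/
lemma ae_shift {P : X → Prop} (hP : MeasurableSet {x | P x}) (k : X)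
    (h : ∀ᵐ x ∂lamX, P x) : ∀ᵐ x ∂lamX, P (x + k) := by
  rw [ae_iff] at h ⊢
  have heq : {x | ¬ P (x + k)} = (· + k) ⁻¹' {x | P x}ᶜ := by
    ext x; simp
  rw [heq, (measurePreserving_add_right lamX k).measure_preimage
    hP.compl.nullMeasurableSet]
  simpa [Set.compl_setOf] using h

/-- Bounded continuous-of-pair compositions are integrable. -/
lemma integC (u : Y × Y → ℝ) (hu : Continuous u) (g1 g2 : X → Y)
    (h1 : Measurable g1) (h2 : Measurable g2) :
    Integrable (fun x => u (g1 x, g2 x)) lamX := by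
  have : SecondCountableTopology Y := EMetric.secondCountable_of_sigmaCompact Y
  obtain ⟨z, -, hz⟩ := isCompact_univ.exists_isMaxOn univ_nonempty
    (hu.norm.continuousOn (s := univ))
  rw [isMaxOn_iff] at hz
  exact ⟨((hu.measurable).comp (h1.prodMk h2)).aestronglyMeasurable,
    HasFiniteIntegral.of_bounded (C := ‖u z‖) (ae_of_all _ fun x => hz _ (mem_univ _))⟩

/-- Translation continuity of the measure of a set. -/
lemma shift_small (A : Set X) (hA : MeasurableSet A) {ε : ℝ≥0∞} (hε : 0 < ε) :
    ∀ᶠ k in 𝓝 (0:X), lamX (A \ {x | x + k ∈ A}) ≤ ε := by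
  have hfin : lamX A ≠ ∞ := (measure_lt_top lamX A).ne
  have hε2 : (ε/2 : ℝ≥0∞) ≠ 0 := by
    simp [ENNReal.div_eq_zero_iff, hε.ne']
  obtain ⟨K, hKA, hKc, hK⟩ := hA.exists_isCompact_lt_add hfin hε2
  obtain ⟨U, hAU, hUo, hU⟩ := A.exists_isOpen_lt_add hfin hε2
  have hKU : K ⊆ U := hKA.trans hAU
  obtain ⟨V, hV, hKV⟩ := compact_open_separated_add_right hKc hUo hKU
  have hAK : lamX (A \ K) ≤ ε/2 :=
    le_of_lt (measure_diff_lt_of_lt_add hKc.measurableSet.nullMeasurableSet hKA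
      (hKc.measure_lt_top).ne hK)
  have hUA : lamX (U \ A) ≤ ε/2 :=
    le_of_lt (measure_diff_lt_of_lt_add hA.nullMeasurableSet hAU hfin hU)
  refine eventually_of_mem hV fun k hk => ?_
  have hsub : A \ {x | x + k ∈ A} ⊆ (A \ K) ∪ ((· + k) ⁻¹' (U \ A)) := by
    rintro x ⟨hxA, hxk⟩
    by_cases hxK : x ∈ K
    · right
      exact ⟨hKV (Set.add_mem_add hxK hk), hxk⟩
    · left
      exact ⟨hxA, hxK⟩
  calc lamX (A \ {x | x + k ∈ A}) ≤ lamX ((A \ K) ∪ ((· + k) ⁻¹' (U \ A))) :=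
        measure_mono hsub
  _ ≤ lamX (A \ K) + lamX ((· + k) ⁻¹' (U \ A)) := measure_union_le _ _
  _ = lamX (A \ K) + lamX (U \ A) := by
        rw [(measurePreserving_add_right lamX k).measure_preimage
          ((hUo.measurableSet.diff hA).nullMeasurableSet)]
  _ ≤ ε/2 + ε/2 := add_le_add hAK hUA
  _ = ε := ENNReal.add_halves ε

/-- The key continuity-of-translation estimate. -/
lemma core (f : X → Y) (hf : Measurable f) {ε : ℝ} (hε : 0 < ε) :
    ∀ᶠ k in 𝓝 (0:X), ∫ x, rho (f (x + k)) (f x) ∂lamX ≤ ε := by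
  have hsc : SecondCountableTopology Y := EMetric.secondCountable_of_sigmaCompact Y
  obtain ⟨M, hM0, hMb⟩ := rho_bound (Y := Y)
  have h0 : (0:Y) ∈ (univ : Set Y) := mem_univ _
  -- a good simple approximation
  have hconv : Tendsto (fun n => ∫ x, rho (SimpleFunc.approxOn f hf univ 0 h0 n x) (f x) ∂lamX)
      atTop (𝓝 0) := by
    have h00 : (0:ℝ) = ∫ x, rho (f x) (f x) ∂lamX := by simp [rho_self]
    rw [h00]
    apply tendsto_integral_of_dominated_convergence (fun _ => M)
    · intro n
      exact (integC lamX _ rho_continuous _ _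
        (SimpleFunc.measurable _) hf).1
    · exact integrable_const M
    · intro n
      refine ae_of_all _ fun x => ?_
      rw [Real.norm_eq_abs, abs_of_nonneg (rho_nonneg _ _)]
      exact hMb _ _
    · refine ae_of_all _ fun x => ?_
      have hx : Tendsto (fun n => SimpleFunc.approxOn f hf univ 0 h0 n x) atTop (𝓝 (f x)) :=
        SimpleFunc.tendsto_approxOn hf h0 (by simp)
      have hcY : Continuous fun y : Y => rho y (f x) :=
        rho_continuous.comp (continuous_id.prodMk continuous_const)
      exact (hcY.tendsto (f x)).comp hx
  obtain ⟨n, hn⟩ : ∃ n, ∫ x, rho (SimpleFunc.approxOn f hf univ 0 h0 n x) (f x) ∂lamX ≤ ε/4 :=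
    (hconv.eventually_lt_const (by linarith : (0:ℝ) < ε/4)).mono
      (fun n h => le_of_lt h) |>.exists
  set s : SimpleFunc X Y := SimpleFunc.approxOn f hf univ 0 h0 n with hs
  set t : Finset Y := s.range with ht
  have hbudget : (0:ℝ≥0∞) < ENNReal.ofReal (ε/(2*M)) / (t.card + 1) := by
    apply ENNReal.div_pos
    · simp only [ne_eq, ENNReal.ofReal_eq_zero, not_le]
      positivity
    · exact (ENNReal.add_ne_top.2 ⟨ENNReal.natCast_ne_top _, ENNReal.one_ne_top⟩)
  have hev : ∀ᶠ k in 𝓝 (0:X), ∀ c ∈ t,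
      lamX (s ⁻¹' {c} \ {x | x + k ∈ s ⁻¹' {c}}) ≤ ENNReal.ofReal (ε/(2*M)) / (t.card + 1) := by
    rw [eventually_all_finset]
    intro c _
    exact shift_small lamX _ (s.measurableSet_preimage _) hbudget
  filter_upwards [hev] with k hk
  set bad : Set X := {x : X | s (x + k) ≠ s x} with hbad
  have hbadm : MeasurableSet bad := by
    have : MeasurableSet {x : X | s (x + k) = s x} :=
      measurableSet_eq_fun (s.measurable.comp (measurable_add_const k)) s.measurable
    exact this.compl
  have hsub : bad ⊆ ⋃ c ∈ t, (s ⁻¹' {c} \ {x | x + k ∈ s ⁻¹' {c}}) := by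
    intro x hx
    refine Set.mem_biUnion (s.mem_range_self x) ⟨rfl, fun hmem => hx ?_⟩
    simpa using hmem
  have hbadμ : lamX bad ≤ ENNReal.ofReal (ε/(2*M)) := by
    calc lamX bad ≤ ∑ c ∈ t, lamX (s ⁻¹' {c} \ {x | x + k ∈ s ⁻¹' {c}}) :=
          (measure_mono hsub).trans (measure_biUnion_finset_le t _)
    _ ≤ ∑ c ∈ t, ENNReal.ofReal (ε/(2*M)) / (t.card + 1) :=
          Finset.sum_le_sum fun c hc => hk c hc
    _ = (t.card : ℝ≥0∞) * (ENNReal.ofReal (ε/(2*M)) / (t.card + 1)) := by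
          rw [Finset.sum_const, nsmul_eq_mul]
    _ ≤ ((t.card : ℝ≥0∞) + 1) * (ENNReal.ofReal (ε/(2*M)) / ((t.card : ℝ≥0∞) + 1)) := by
          exact mul_le_mul_left (le_self_add) _
    _ = ENNReal.ofReal (ε/(2*M)) := by
          rw [ENNReal.mul_div_cancel']
          · simp
          · exact fun h => absurd h (ENNReal.add_ne_top.2 ⟨ENNReal.natCast_ne_top _, ENNReal.one_ne_top⟩)
  -- triangle splitting
  have i1 : Integrable (fun x => rho (f (x + k)) (s (x + k))) lamX :=
    integC lamX _ rho_continuous _ _ (hf.comp (measurable_add_const k))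
      (s.measurable.comp (measurable_add_const k))
  have i2 : Integrable (fun x => rho (s (x + k)) (s x)) lamX :=
    integC lamX _ rho_continuous _ _ (s.measurable.comp (measurable_add_const k)) s.measurable
  have i3 : Integrable (fun x => rho (s x) (f x)) lamX :=
    integC lamX _ rho_continuous _ _ s.measurable hf
  have itot : Integrable (fun x => rho (f (x + k)) (f x)) lamX :=
    integC lamX _ rho_continuous _ _ (hf.comp (measurable_add_const k)) hf
  have hpt : ∀ x, rho (f (x + k)) (f x)
      ≤ rho (f (x + k)) (s (x + k)) + rho (s (x + k)) (s x) + rho (s x) (f x) := by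
    intro x
    calc rho (f (x + k)) (f x) ≤ rho (f (x + k)) (s (x + k)) + rho (s (x + k)) (f x) :=
          rho_triangle _ _ _
    _ ≤ rho (f (x + k)) (s (x + k)) + (rho (s (x + k)) (s x) + rho (s x) (f x)) := by
          have := rho_triangle (s (x + k)) (s x) (f x)
          linarith
    _ = _ := by ring
  have hT1 : ∫ x, rho (f (x + k)) (s (x + k)) ∂lamX ≤ ε/4 := by
    have hcv := MeasurePreserving.integral_comp' (f := MeasurableEquiv.addRight k)
      (measurePreserving_add_right lamX k) (fun z => rho (f z) (s z))
    have heq : ∫ x, rho (f (x + k)) (s (x + k)) ∂lamX = ∫ z, rho (f z) (s z) ∂lamX := hcv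
    rw [heq]
    calc ∫ z, rho (f z) (s z) ∂lamX = ∫ z, rho (s z) (f z) ∂lamX := by
          simp_rw [rho_comm]
    _ ≤ ε/4 := hn
  have hT2 : ∫ x, rho (s (x + k)) (s x) ∂lamX ≤ ε/2 := by
    have hind : ∀ x, rho (s (x + k)) (s x) ≤ bad.indicator (fun _ => M) x := by
      intro x
      by_cases hx : x ∈ bad
      · rw [Set.indicator_of_mem hx]
        exact hMb _ _
      · rw [Set.indicator_of_notMem hx]
        have : s (x + k) = s x := not_not.1 hx
        rw [this, rho_self]
    calc ∫ x, rho (s (x + k)) (s x) ∂lamX ≤ ∫ x, bad.indicator (fun _ => M) x ∂lamX :=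
          integral_mono i2 ((integrable_const M).indicator hbadm) hind
    _ = (lamX bad).toReal • M := integral_indicator_const M hbadm
    _ = (lamX bad).toReal * M := smul_eq_mul _ _
    _ ≤ (ε/(2*M)) * M := by
          apply mul_le_mul_of_nonneg_right _ hM0.le
          exact ENNReal.toReal_le_of_le_ofReal (by positivity) hbadμ
    _ = ε/2 := by field_simp
  have hT3 : ∫ x, rho (s x) (f x) ∂lamX ≤ ε/4 := by
    calc ∫ x, rho (s x) (f x) ∂lamX = ∫ x, rho (SimpleFunc.approxOn f hf univ 0 h0 n x) (f x) ∂lamX := rfl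
    _ ≤ ε/4 := hn
  have i12 : Integrable (fun x => rho (f (x + k)) (s (x + k)) + rho (s (x + k)) (s x)) lamX :=
    i1.add i2
  have i123 : Integrable
      (fun x => rho (f (x + k)) (s (x + k)) + rho (s (x + k)) (s x) + rho (s x) (f x)) lamX :=
    i12.add i3
  calc ∫ x, rho (f (x + k)) (f x) ∂lamX
      ≤ ∫ x, (rho (f (x + k)) (s (x + k)) + rho (s (x + k)) (s x) + rho (s x) (f x)) ∂lamX :=
        integral_mono itot i123 hpt
  _ = (∫ x, rho (f (x + k)) (s (x + k)) ∂lamX) + (∫ x, rho (s (x + k)) (s x) ∂lamX)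
        + ∫ x, rho (s x) (f x) ∂lamX := by
        rw [integral_add i12 i3, integral_add i1 i2]
  _ ≤ ε/4 + ε/2 + ε/4 := by linarith
  _ = ε := by ring

end XSide

end Stmt11Aux

open Stmt11Aux

theorem stmt11_aux {X Y : Type} [MetricSpace X] [AddCommGroup X] [IsTopologicalAddGroup X]
    [CompactSpace X] [MeasurableSpace X] [BorelSpace X]
    [MetricSpace Y] [AddCommGroup Y] [IsTopologicalAddGroup Y]
    [CompactSpace Y] [MeasurableSpace Y] [BorelSpace Y]
    (lamX : Measure X) [lamX.IsAddHaarMeasure] [IsProbabilityMeasure lamX]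
    (f : X → Y) (hf : Measurable f) :
    (IsClosed {h : X | ∃ c : Y, ∀ᵐ x ∂lamX, f (x + h) - f x = c} ∧
      ∃ H : AddSubgroup X,
        (H : Set X) = {h : X | ∃ c : Y, ∀ᵐ x ∂lamX, f (x + h) - f x = c}) ∧
    ((∃ (ψ : X →+ Y) (y : Y), Continuous ψ ∧ ∀ᵐ x ∂lamX, f x = ψ x + y) ↔
      {h : X | ∃ c : Y, ∀ᵐ x ∂lamX, f (x + h) - f x = c} = Set.univ) := by
  have hscX : SecondCountableTopology X := EMetric.secondCountable_of_sigmaCompact X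
  have hscY : SecondCountableTopology Y := EMetric.secondCountable_of_sigmaCompact Y
  obtain ⟨M, hM0, hMb⟩ := rho_bound (Y := Y)
  set S : Set X := {h : X | ∃ c : Y, ∀ᵐ x ∂lamX, f (x + h) - f x = c} with hSdef
  have measP : ∀ (h : X) (c : Y), MeasurableSet {x : X | f (x + h) - f x = c} := by
    intro h c
    have hm : Measurable fun x => f (x + h) - f x := (hf.comp (measurable_add_const h)).sub hf
    exact hm (measurableSet_singleton c)
  have hne : (ae lamX).NeBot := ae_neBot.2 (IsProbabilityMeasure.ne_zero lamX)
  have uniq : ∀ {g : X → Y} {c c' : Y},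
      (∀ᵐ x ∂lamX, g x = c) → (∀ᵐ x ∂lamX, g x = c') → c = c' := by
    intro g c c' h1 h2
    obtain ⟨x, hx1, hx2⟩ := (h1.and h2).exists
    rw [← hx1, hx2]
  have shiftc : ∀ {h : X} {c : Y}, (∀ᵐ x ∂lamX, f (x + h) - f x = c) →
      ∀ k : X, ∀ᵐ x ∂lamX, f (x + k + h) - f (x + k) = c :=
    fun {h c} hc k => ae_shift lamX (measP h c) k hc
  -- subgroup structure
  have zero_mem : (0:X) ∈ S := ⟨0, ae_of_all _ fun x => by simp⟩
  have add_mem' : ∀ {a b : X}, a ∈ S → b ∈ S → a + b ∈ S := by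
    rintro a b ⟨c, hc⟩ ⟨c', hc'⟩
    refine ⟨c + c', ?_⟩
    filter_upwards [shiftc hc b, hc'] with x h1 h2
    rw [show x + (a + b) = x + b + a from by abel]
    calc f (x + b + a) - f x = (f (x + b + a) - f (x + b)) + (f (x + b) - f x) := by abel
    _ = c + c' := by rw [h1, h2]
  have neg_mem' : ∀ {a : X}, a ∈ S → -a ∈ S := by
    rintro a ⟨c, hc⟩
    refine ⟨-c, ?_⟩
    filter_upwards [shiftc hc (-a)] with x h1
    rw [show x + -a + a = x from by abel] at h1
    rw [← h1]
    abel
  -- the translation functional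
  set F : X → ℝ := fun k => ∫ x, rho (f (x + k)) (f x) ∂lamX with hF
  have hFev : ∀ ε > (0:ℝ), ∀ᶠ k in 𝓝 (0:X), F k ≤ ε := fun ε hε => core lamX f hf hε
  have hFnonneg : ∀ k, 0 ≤ F k := fun k => integral_nonneg fun x => rho_nonneg _ _
  have hFcv : ∀ h h' : X, ∫ x, rho (f (x + h)) (f (x + h')) ∂lamX = F (h - h') := by
    intro h h'
    have hcv := MeasurePreserving.integral_comp' (f := MeasurableEquiv.addRight h')
      (measurePreserving_add_right lamX h') (fun z => rho (f (z + (h - h'))) (f z))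
    have heq : ∫ x, rho (f (x + h' + (h - h'))) (f (x + h')) ∂lamX = F (h - h') := hcv
    rw [← heq]
    congr 1
    funext x
    congr 2
    abel
  have integD : ∀ (g1 g2 : X → Y), Measurable g1 → Measurable g2 →
      Integrable (fun x => dist (g1 x) (g2 x)) lamX := by
    intro g1 g2 h1 h2
    exact integC lamX (fun w => dist w.1 w.2) continuous_dist g1 g2 h1 h2
  have integR : ∀ (g1 g2 : X → Y), Measurable g1 → Measurable g2 →
      Integrable (fun x => rho (g1 x) (g2 x)) lamX := by
    intro g1 g2 h1 h2
    exact integC lamX (fun w => rho w.1 w.2) rho_continuous g1 g2 h1 h2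
  have meas_h : ∀ h : X, Measurable fun x => f (x + h) := fun h =>
    hf.comp (measurable_add_const h)
  -- the basic distance estimate between constants
  have distc : ∀ {h h' : X} {c c' : Y}, (∀ᵐ x ∂lamX, f (x + h) - f x = c) →
      (∀ᵐ x ∂lamX, f (x + h') - f x = c') → dist c c' ≤ F (h - h') := by
    intro h h' c c' hc hc'
    have hconst : ∀ᵐ x ∂lamX,
        dist (f (x + h) - f x) (f (x + h') - f x) = dist c c' := by
      filter_upwards [hc, hc'] with x h1 h2
      rw [h1, h2]
    have h1 : dist c c' = ∫ x, dist (f (x + h) - f x) (f (x + h') - f x) ∂lamX := by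
      rw [integral_congr_ae hconst]
      simp
    rw [h1, ← hFcv h h']
    exact integral_mono (integD _ _ ((meas_h h).sub hf) ((meas_h h').sub hf))
      (integR _ _ (meas_h h) (meas_h h')) fun x => dist_sub_le_rho _ _ _
  -- a triangle-type inequality for F
  have Fsub : ∀ a e b : X, F (a - b) ≤ F (a - e) + F (e - b) := by
    intro a e b
    have j1 := integR _ _ (meas_h a) (meas_h e)
    have j2 := integR _ _ (meas_h e) (meas_h b)
    have j12 : Integrable (fun x => rho (f (x + a)) (f (x + e)) + rho (f (x + e)) (f (x + b)))
        lamX := j1.add j2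
    rw [← hFcv a b, ← hFcv a e, ← hFcv e b, ← integral_add j1 j2]
    exact integral_mono (integR _ _ (meas_h a) (meas_h b)) j12 fun x => rho_triangle _ _ _
  -- closedness
  have hclosed : IsClosed S := by
    refine IsSeqClosed.isClosed ?_
    intro u h hu hlim
    choose c hc using hu
    have hk1 : Tendsto (fun n => u n - h) atTop (𝓝 0) := by
      have := hlim.sub (tendsto_const_nhds (x := h))
      simpa using this
    have hk2 : Tendsto (fun n => h - u n) atTop (𝓝 0) := by
      have := (tendsto_const_nhds (x := h)).sub hlim
      simpa using this
    have hFk1 : ∀ ε > (0:ℝ), ∀ᶠ n in atTop, F (u n - h) ≤ ε := fun ε hε =>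
      hk1.eventually (hFev ε hε)
    have hFk2 : ∀ ε > (0:ℝ), ∀ᶠ n in atTop, F (h - u n) ≤ ε := fun ε hε =>
      hk2.eventually (hFev ε hε)
    have hcauchy : CauchySeq c := by
      rw [Metric.cauchySeq_iff']
      intro ε hε
      obtain ⟨N, hN⟩ := ((hFk1 (ε/3) (by linarith)).and (hFk2 (ε/3) (by linarith))).exists_forall_of_atTop
      refine ⟨N, fun n hn => ?_⟩
      have hd : dist (c n) (c N) ≤ F (u n - u N) := distc (hc n) (hc N)
      have hd2 : F (u n - u N) ≤ F (u n - h) + F (h - u N) := Fsub _ _ _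
      have h1 := (hN n hn).1
      have h2 := (hN N le_rfl).2
      calc dist (c n) (c N) ≤ F (u n - h) + F (h - u N) := hd.trans hd2
      _ ≤ ε/3 + ε/3 := add_le_add h1 h2
      _ < ε := by linarith
    obtain ⟨cl, hcl⟩ := cauchySeq_tendsto_of_complete hcauchy
    refine ⟨cl, ?_⟩
    have hInt : Integrable (fun x => dist (f (x + h) - f x) cl) lamX := by
      have : Continuous fun w : Y × Y => dist (w.1 - w.2) cl := by fun_prop
      exact integC lamX _ this _ _ (meas_h h) hf
    have hIntval : ∫ x, dist (f (x + h) - f x) cl ∂lamX = 0 := by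
      refine le_antisymm ?_ (integral_nonneg fun x => dist_nonneg)
      by_contra hpos
      push_neg at hpos
      set a := ∫ x, dist (f (x + h) - f x) cl ∂lamX with ha
      obtain ⟨n, hn1, hn2⟩ := ((hFk2 (a/3) (by linarith)).and
        (hcl.eventually (Metric.ball_mem_nhds cl (show (0:ℝ) < a/3 by linarith)))).exists
      -- a ≤ F (h - u n) + dist (c n) cl
      have hstep : a ≤ F (h - u n) + dist (c n) cl := by
        have hptae : ∀ᵐ x ∂lamX, dist (f (x + h) - f x) cl ≤
            rho (f (x + h)) (f (x + u n)) + dist (c n) cl := by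
          filter_upwards [hc n] with x hx
          calc dist (f (x + h) - f x) cl
              ≤ dist (f (x + h) - f x) (f (x + u n) - f x) + dist (f (x + u n) - f x) cl :=
                dist_triangle _ _ _
          _ ≤ rho (f (x + h)) (f (x + u n)) + dist (c n) cl := by
                rw [← hx]
                exact add_le_add (dist_sub_le_rho _ _ _) le_rfl
        have j1 := integR _ _ (meas_h h) (meas_h (u n))
        have j2 : Integrable (fun _ : X => dist (c n) cl) lamX := integrable_const _
        have j12 : Integrable
            (fun x => rho (f (x + h)) (f (x + u n)) + dist (c n) cl) lamX := j1.add j2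
        have := integral_mono_ae hInt j12 hptae
        rw [integral_add j1 j2, integral_const] at this
        simp only [probReal_univ, one_smul] at this
        rw [hFcv h (u n)] at this
        exact this
      have hlt : dist (c n) cl < a/3 := by simpa [Metric.mem_ball] using hn2
      have : a ≤ a/3 + a/3 := hstep.trans (add_le_add hn1 hlt.le)
      linarith
    have hzero := (integral_eq_zero_iff_of_nonneg (fun x => dist_nonneg) hInt).1 hIntval
    filter_upwards [hzero] with x hx
    exact dist_eq_zero.1 hx
  -- forward direction
  have fwd : (∃ (ψ : X →+ Y) (y : Y), Continuous ψ ∧ ∀ᵐ x ∂lamX, f x = ψ x + y) →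
      S = Set.univ := by
    rintro ⟨ψ, y, hψc, hae⟩
    refine Set.eq_univ_of_forall fun h => ?_
    refine ⟨ψ h, ?_⟩
    have hmeas : MeasurableSet {x | f x = ψ x + y} :=
      measurableSet_eq_fun hf ((hψc.measurable).add measurable_const)
    filter_upwards [hae, ae_shift lamX hmeas h hae] with x h1 h2
    rw [h1, h2, map_add]
    abel
  -- reverse direction
  have rev : S = Set.univ →
      ∃ (ψ : X →+ Y) (y : Y), Continuous ψ ∧ ∀ᵐ x ∂lamX, f x = ψ x + y := by
    intro hSuniv
    have hall : ∀ h : X, ∃ c : Y, ∀ᵐ x ∂lamX, f (x + h) - f x = c := fun h =>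
      hSuniv.ge (Set.mem_univ h)
    choose φ hφ using hall
    have hadd : ∀ a b : X, φ (a + b) = φ a + φ b := by
      intro a b
      have hab : ∀ᵐ x ∂lamX, f (x + (a + b)) - f x = φ a + φ b := by
        filter_upwards [shiftc (hφ a) b, hφ b] with x h1 h2
        rw [show x + (a + b) = x + b + a from by abel]
        calc f (x + b + a) - f x = (f (x + b + a) - f (x + b)) + (f (x + b) - f x) := by abel
        _ = φ a + φ b := by rw [h1, h2]
      exact uniq (hφ (a + b)) hab
    set ψ : X →+ Y := AddMonoidHom.mk' φ fun a b => hadd a b with hψ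
    have hψapp : ∀ h, ψ h = φ h := fun h => rfl
    have hcont : Continuous ψ := by
      apply continuous_of_continuousAt_zero ψ
      rw [ContinuousAt, map_zero]
      rw [Metric.tendsto_nhds]
      intro ε hε
      filter_upwards [hFev (ε/2) (by linarith)] with k hk
      have hd : dist (ψ k) 0 ≤ F k := by
        have hconst : ∀ᵐ x ∂lamX, dist (f (x + k) - f x) (0:Y) = dist (ψ k) 0 := by
          filter_upwards [hφ k] with x hx
          rw [hx, hψapp]
        have h1 : dist (ψ k) 0 = ∫ x, dist (f (x + k) - f x) (0:Y) ∂lamX := by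
          rw [integral_congr_ae hconst]
          simp
        rw [h1]
        refine integral_mono ?_ (integR _ _ (meas_h k) hf) fun x => ?_
        · have : Continuous fun w : Y × Y => dist (w.1 - w.2) (0:Y) := by fun_prop
          exact integC lamX _ this _ _ (meas_h k) hf
        · have := dist_sub_le_rho (f (x + k)) (f x) (f x)
          simpa [sub_self] using this
      exact lt_of_le_of_lt (hd.trans hk) (by linarith)
    -- Fubini argument
    set A : Set (X × X) := {p | f (p.2 + p.1) - f p.2 = ψ p.1} with hA
    have hAmeas : MeasurableSet A := by
      have m1 : Measurable fun p : X × X => f (p.2 + p.1) - f p.2 :=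
        ((hf.comp (measurable_snd.add measurable_fst)).sub (hf.comp measurable_snd))
      have m2 : Measurable fun p : X × X => ψ p.1 := (hcont.measurable).comp measurable_fst
      exact measurableSet_eq_fun m1 m2
    have hslice : ∀ h : X, lamX (Prod.mk h ⁻¹' Aᶜ) = 0 := by
      intro h
      have := hφ h
      rw [ae_iff] at this
      exact this
    have hAfull : ∀ᵐ p ∂(lamX.prod lamX), p ∈ A := by
      rw [ae_iff]
      have hculp : {p : X × X | ¬ p ∈ A} = Aᶜ := rfl
      rw [hculp, Measure.measure_prod_null hAmeas.compl]
      exact ae_of_all _ hslice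
    have hswap : ∀ᵐ p ∂(lamX.prod lamX), f (p.1 + p.2) - f p.1 = ψ p.2 := by
      rw [ae_iff]
      have hpre : {p : X × X | ¬ (f (p.1 + p.2) - f p.1 = ψ p.2)} = Prod.swap ⁻¹' Aᶜ := rfl
      rw [hpre, ← Measure.map_apply measurable_swap hAmeas.compl, Measure.prod_swap]
      rw [ae_iff] at hAfull
      exact hAfull
    have hxae := Measure.ae_ae_of_ae_prod hswap
    obtain ⟨x₀, hx₀⟩ := hxae.exists
    refine ⟨ψ, f x₀ - ψ x₀, hcont, ?_⟩
    have hmeasP : MeasurableSet {h : X | f (x₀ + h) - f x₀ = ψ h} := by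
      refine measurableSet_eq_fun ?_ hcont.measurable
      exact (hf.comp (measurable_const_add x₀)).sub measurable_const
    have hshifted := ae_shift lamX hmeasP (-x₀) hx₀
    filter_upwards [hshifted] with x hx
    rw [show x₀ + (x + -x₀) = x from by abel] at hx
    rw [map_add, map_neg] at hx
    -- hx : f x - f x₀ = ψ x + -(ψ x₀)
    have : f x = (f x - f x₀) + f x₀ := by abel
    rw [this, hx]
    abel
  let H : AddSubgroup X :=
    { carrier := S
      add_mem' := fun ha hb => add_mem' ha hb
      zero_mem' := zero_mem
      neg_mem' := fun ha => neg_mem' ha }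
  exact ⟨⟨hclosed, ⟨H, rfl⟩⟩, fwd, rev⟩

/-- Let `X`, `Y` be (infinite) compact metrizable abelian groups,
`λ_X` the normalized Haar measure on `X`, and `f : X → Y` Borel measurable.  Let
`C(f)` be the set of `h ∈ X` such that `x ↦ f(x+h) − f(x)` is a.e. constant.  Then
`C(f)` is a closed subgroup of `X`, and `f` is a.e. equal to an affine map (a continuous
group homomorphism plus a constant) if and only if `C(f) = X`. -/
theorem stmt11 {X Y : Type} [TopologicalSpace X] [AddCommGroup X] [IsTopologicalAddGroup X]
    [CompactSpace X] [TopologicalSpace.MetrizableSpace X] [Infinite X]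
    [MeasurableSpace X] [BorelSpace X]
    [TopologicalSpace Y] [AddCommGroup Y] [IsTopologicalAddGroup Y]
    [CompactSpace Y] [TopologicalSpace.MetrizableSpace Y] [Infinite Y]
    [MeasurableSpace Y] [BorelSpace Y]
    (lamX : Measure X) [lamX.IsAddHaarMeasure] [IsProbabilityMeasure lamX]
    (f : X → Y) (hf : Measurable f) :
    (IsClosed {h : X | ∃ c : Y, ∀ᵐ x ∂lamX, f (x + h) - f x = c} ∧
      ∃ H : AddSubgroup X,
        (H : Set X) = {h : X | ∃ c : Y, ∀ᵐ x ∂lamX, f (x + h) - f x = c}) ∧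
    ((∃ (ψ : X →+ Y) (y : Y), Continuous ψ ∧ ∀ᵐ x ∂lamX, f x = ψ x + y) ↔
      {h : X | ∃ c : Y, ∀ᵐ x ∂lamX, f (x + h) - f x = c} = Set.univ) := by
  letI : MetricSpace X := TopologicalSpace.metrizableSpaceMetric X
  letI : MetricSpace Y := TopologicalSpace.metrizableSpaceMetric Y
  exact stmt11_aux lamX f hf
end

section
/- Let X and Y be compact metrizable abelian groups with normalized Haar measures λ_X and λ_Y, and let f : X → Y be a Borel measurable map. Define i : X → X × Y by i(x) = (x, f(x)) and let μ = i_*(λ_X) be the pushforward measure on X × Y. Then f is λ_X-almost everywhere equal to an affine map if and only if μ is an affine measure, i.e., μ is a translate of the normalized Haar measure of some closed subgroup of X × Y. -/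
open MeasureTheory

/-- A Borel probability measure `μ` on a compact abelian group `G` is *affine* if it is
the translate, by some `g ∈ G`, of the normalized Haar measure of a closed subgroup
`H ⊆ G`, viewed as a measure on `G`.  The normalized Haar measure of `H` viewed as a
measure on `G` is encoded by its characteristic properties: it is the unique Borel
probability measure `ν` on `G` with `ν(H) = 1` that is invariant under translation by
every element of `H`. -/
def IsAffineMeasure {G : Type} [TopologicalSpace G] [AddCommGroup G]
    [MeasurableSpace G] (μ : Measure G) : Prop :=
  ∃ (H : AddSubgroup G) (ν : Measure G) (g : G),
    IsClosed (H : Set G) ∧ IsProbabilityMeasure ν ∧ ν (H : Set G) = 1 ∧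
      (∀ h ∈ H, Measure.map (fun x => x + h) ν = ν) ∧
      μ = Measure.map (fun x => x + g) ν

/-- Let `X`, `Y` be (infinite) compact metrizable abelian groups with
normalized Haar measures, `f : X → Y` Borel measurable, and let `μ = i_*(λ_X)` be the
pushforward of `λ_X` under `i : x ↦ (x, f x)`.  Then `f` is `λ_X`-a.e. equal to an affine
map if and only if `μ` is an affine measure on `X × Y`. -/
theorem stmt13 {X Y : Type} [TopologicalSpace X] [AddCommGroup X] [IsTopologicalAddGroup X]
    [CompactSpace X] [TopologicalSpace.MetrizableSpace X]
    [SecondCountableTopology X] [Infinite X] [MeasurableSpace X] [BorelSpace X]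
    [TopologicalSpace Y] [AddCommGroup Y] [IsTopologicalAddGroup Y]
    [CompactSpace Y] [TopologicalSpace.MetrizableSpace Y]
    [SecondCountableTopology Y] [Infinite Y] [MeasurableSpace Y] [BorelSpace Y]
    (lamX : Measure X) [lamX.IsAddHaarMeasure] [IsProbabilityMeasure lamX]
    (f : X → Y) (hf : Measurable f) :
    (∃ (ψ : X →+ Y) (y : Y), Continuous ψ ∧ ∀ᵐ x ∂lamX, f x = ψ x + y) ↔
      IsAffineMeasure (Measure.map (fun x => (x, f x)) lamX) := by
  have hmi : Measurable fun x : X => (x, f x) := measurable_id.prodMk hf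
  constructor
  · rintro ⟨ψ, y, hψc, hae⟩
    set j : X → X × Y := fun x => (x, ψ x) with hj
    have hjc : Continuous j := continuous_id.prodMk hψc
    have hjm : Measurable j := hjc.measurable
    refine ⟨((AddMonoidHom.id X).prod ψ).range, Measure.map j lamX, (0, y),
      ?_, ?_, ?_, ?_, ?_⟩
    · have : (((AddMonoidHom.id X).prod ψ).range : Set (X × Y)) =
        Set.range j := by
        ext p; simp [AddMonoidHom.mem_range, AddMonoidHom.prod_apply, j]
      rw [this]
      exact (isCompact_range hjc).isClosed
    · exact Measure.isProbabilityMeasure_map hjm.aemeasurable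
    · have hr : (((AddMonoidHom.id X).prod ψ).range : Set (X × Y)) =
        Set.range j := by
        ext p; simp [AddMonoidHom.mem_range, AddMonoidHom.prod_apply, j]
      rw [hr, Measure.map_apply hjm (isCompact_range hjc).isClosed.measurableSet]
      have : j ⁻¹' Set.range j = Set.univ := by
        ext x; simp
      rw [this]; simp
    · rintro h hh
      obtain ⟨a, rfl⟩ := hh
      rw [Measure.map_map (measurable_add_const _) hjm]
      have : ((fun p => p + ((AddMonoidHom.id X).prod ψ) a) ∘ j)
          = j ∘ (fun x => x + a) := by
        funext x
        simp [j, Prod.ext_iff, map_add, AddMonoidHom.prod_apply]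
      rw [this, ← Measure.map_map hjm (measurable_add_const a),
        Measure.IsAddRightInvariant.map_add_right_eq_self a]
    · rw [Measure.map_map (measurable_add_const _) hjm]
      have h2 : ((fun p => p + ((0 : X), y)) ∘ j) = fun x => (x, ψ x + y) := by
        funext x; simp [j, Prod.ext_iff]
      rw [h2]
      exact Measure.map_congr (hae.mono fun x hx => by simp [hx])
  · rintro ⟨H, ν, g, hHc, hν, hνH, hinv, hμ⟩
    have hHcomp : IsCompact (H : Set (X × Y)) := hHc.isCompact
    -- vertical triviality
    have hvert : ∀ k : Y, ((0 : X), k) ∈ H → k = 0 := by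
      intro k hk
      by_contra hk0
      have hm1 : Measurable fun p : X × Y => p + ((0 : X), k) := measurable_add_const _
      have hμinv : Measure.map (fun p => p + ((0 : X), k))
          (Measure.map (fun x => (x, f x)) lamX) = Measure.map (fun x => (x, f x)) lamX := by
        rw [hμ, Measure.map_map hm1 (measurable_add_const g)]
        have : ((fun p => p + ((0 : X), k)) ∘ fun p => p + g)
            = (fun p => p + g) ∘ fun p => p + ((0 : X), k) := by
          funext p; simp [add_right_comm]
        rw [this, ← Measure.map_map (measurable_add_const g) hm1, hinv _ hk]
      have hG : MeasurableSet {p : X × Y | p.2 = f p.1} :=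
        measurableSet_eq_fun measurable_snd (hf.comp measurable_fst)
      have h1 : Measure.map (fun x => (x, f x)) lamX {p : X × Y | p.2 = f p.1} = 1 := by
        rw [Measure.map_apply hmi hG]
        have : (fun x => (x, f x)) ⁻¹' {p : X × Y | p.2 = f p.1} = Set.univ := by
          ext x; simp
        rw [this]; simp
      have h0 : Measure.map (fun p => p + ((0 : X), k))
          (Measure.map (fun x => (x, f x)) lamX) {p : X × Y | p.2 = f p.1} = 0 := by
        rw [Measure.map_apply hm1 hG, Measure.map_apply hmi (hG.preimage hm1)]
        have : (fun x => (x, f x)) ⁻¹' ((fun p => p + ((0 : X), k)) ⁻¹' {p : X × Y | p.2 = f p.1})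
            = ∅ := by
          ext x
          simp only [Set.mem_preimage, Set.mem_setOf_eq, Set.mem_empty_iff_false, iff_false]
          simp only [Prod.mk_add_mk, add_zero]
          intro h
          exact hk0 (by rwa [add_eq_left] at h)
        rw [this]; simp
      rw [hμinv] at h0
      rw [h1] at h0
      exact one_ne_zero h0
    -- the projection hom
    set φ : H →+ X := (AddMonoidHom.fst X Y).comp H.subtype with hφ
    have hφinj : Function.Injective φ := by
      intro p q hpq
      have hmem : ((p : X × Y) - (q : X × Y)) ∈ H := sub_mem p.2 q.2
      have h1 : ((p : X × Y) - (q : X × Y)).1 = 0 := by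
        simpa [φ, sub_eq_zero] using hpq
      have h2 : ((p : X × Y) - (q : X × Y)) = (0, ((p : X × Y) - (q : X × Y)).2) := by
        ext <;> simp [h1]
      have := hvert _ (h2 ▸ hmem)
      have h3 : ((p : X × Y) - (q : X × Y)) = 0 := Prod.ext h1 this
      exact Subtype.ext (sub_eq_zero.mp h3)
    -- the translated coset S has measure one
    set S : Set (X × Y) := (fun p => p + g) '' (H : Set (X × Y)) with hS
    have hScomp : IsCompact S := hHcomp.image (continuous_add_right g)
    have hS1 : Measure.map (fun x => (x, f x)) lamX S = 1 := by
      rw [hμ, Measure.map_apply (measurable_add_const g) hScomp.isClosed.measurableSet]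
      have : (fun p => p + g) ⁻¹' S = (H : Set (X × Y)) :=
        Set.preimage_image_eq _ (add_left_injective g)
      rw [this, hνH]
    -- surjectivity of φ
    have hφsurj : Function.Surjective φ := by
      have hDcomp : IsCompact ((fun x => x + g.1) '' (Prod.fst '' (H : Set (X × Y)))) :=
        ((hHcomp.image continuous_fst).image (continuous_add_right g.1))
      set D := (fun x => x + g.1) '' (Prod.fst '' (H : Set (X × Y))) with hD
      have hD1 : lamX D = 1 := by
        have hsub : S ⊆ Prod.fst ⁻¹' D := by
          rintro p ⟨q, hq, rfl⟩
          exact ⟨q.1, ⟨q, hq, rfl⟩, rfl⟩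
        have h1 : Measure.map (fun x => (x, f x)) lamX (Prod.fst ⁻¹' D) = lamX D := by
          rw [Measure.map_apply hmi (hDcomp.isClosed.measurableSet.preimage measurable_fst)]
          rfl
        have h2 : (1 : ENNReal) ≤ lamX D := by
          rw [← h1, ← hS1]
          exact measure_mono hsub
        exact le_antisymm prob_le_one h2
      have hDuniv : D = Set.univ := by
        by_contra hne
        obtain ⟨x, hx⟩ : Dᶜ.Nonempty := Set.nonempty_compl.mpr hne
        have hopen : IsOpen Dᶜ := hDcomp.isClosed.isOpen_compl
        have hpos : 0 < lamX Dᶜ := hopen.measure_pos lamX ⟨x, hx⟩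
        have : lamX Dᶜ = 0 := by
          have := measure_compl hDcomp.isClosed.measurableSet (measure_ne_top lamX D)
          rw [hD1] at this; simpa using this
        exact hpos.ne' this
      intro x
      have : x + g.1 ∈ D := hDuniv ▸ Set.mem_univ _
      obtain ⟨c, ⟨q, hq, rfl⟩, hc⟩ := this
      have : q.1 = x := by
        have := add_right_cancel hc
        exact this
      exact ⟨⟨q, hq⟩, this⟩
    -- the equivalence and the hom ψ
    haveI : CompactSpace H := isCompact_iff_compactSpace.mp hHcomp
    set e : H ≃+ X := AddEquiv.ofBijective φ ⟨hφinj, hφsurj⟩ with he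
    have hec : Continuous e := continuous_fst.comp continuous_subtype_val
    have hesymmc : Continuous e.symm := by
      have := (Continuous.homeoOfEquivCompactToT2 (f := e.toEquiv) hec).symm.continuous
      exact this
    set ψ : X →+ Y := ((AddMonoidHom.snd X Y).comp H.subtype).comp e.symm.toAddMonoidHom
      with hψ
    have hψc : Continuous ψ := (continuous_snd.comp continuous_subtype_val).comp hesymmc
    have hkey : ∀ p : X × Y, p ∈ H → ψ p.1 = p.2 := by
      intro p hp
      have h1 : e ⟨p, hp⟩ = p.1 := rfl
      have h2 : e.symm p.1 = ⟨p, hp⟩ := by rw [← h1, AddEquiv.symm_apply_apply]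
      simp [ψ, h2]
    refine ⟨ψ, g.2 - ψ g.1, hψc, ?_⟩
    have hae : ∀ᵐ x ∂lamX, (x, f x) ∈ S := by
      have hmem : lamX {x | (x, f x) ∈ S} = 1 := by
        have h := hS1
        rw [Measure.map_apply hmi hScomp.isClosed.measurableSet] at h
        exact h
      have hms : MeasurableSet {x | (x, f x) ∈ S} :=
        hScomp.isClosed.measurableSet.preimage hmi
      rw [Filter.eventually_iff]
      refine mem_ae_iff.mpr ?_
      have := measure_compl hms (measure_ne_top lamX _)
      rw [hmem] at this
      simpa using this
    refine hae.mono fun x hx => ?_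
    obtain ⟨p, hp, hpx⟩ := hx
    have h1 : p.1 = x - g.1 := by
      have : p.1 + g.1 = x := congrArg Prod.fst hpx
      exact eq_sub_of_add_eq this
    have h2 : p.2 = f x - g.2 := by
      have : p.2 + g.2 = f x := congrArg Prod.snd hpx
      exact eq_sub_of_add_eq this
    have h3 : ψ (x - g.1) = f x - g.2 := by rw [← h1, ← h2]; exact hkey p hp
    rw [map_sub] at h3
    have : f x = ψ x - ψ g.1 + g.2 := by rw [h3]; abel
    rw [this]; abel
end

section
/- Let X and Y be compact metrizable abelian groups, λ_X the normalized Haar measure on X, and f : X → Y a Borel measurable map. Define q : X × X → Y by q(x, x') = f(x + x') − f(x'). For a Borel probability measure μ on X, let μ̄ = q_*(μ × λ_X) be the pushforward to Y of the product measure μ × λ_X. Then μ ↦ μ̄ is continuous at the point mass δ_{0_X} in the weak* topology: if (μ_k) is a sequence of Borel probability measures on X converging weakly to δ_{0_X}, then μ̄_k converges weakly to δ_{0_Y}. In particular δ̄_{0_X} = δ_{0_Y}. -/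
open MeasureTheory



theorem aux_cont {X Y : Type} [TopologicalSpace X] [AddCommGroup X] [IsTopologicalAddGroup X]
    [CompactSpace X] [TopologicalSpace.MetrizableSpace X]
    [SecondCountableTopology X] [MeasurableSpace X] [BorelSpace X]
    [TopologicalSpace Y] [AddCommGroup Y] [IsTopologicalAddGroup Y]
    [CompactSpace Y] [TopologicalSpace.MetrizableSpace Y]
    [SecondCountableTopology Y] [MeasurableSpace Y] [BorelSpace Y]
    (lamX : Measure X) [lamX.IsAddHaarMeasure] [IsProbabilityMeasure lamX]
    (f : X → Y) (hf : Measurable f) (g : Y → ℝ) (hg : Continuous g) :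
    Continuous (fun x => ∫ u, g (f (x + u) - f u) ∂lamX) := by
  -- the C(Y,ℝ)-valued kernel
  let Phi : C(Y × Y, ℝ) := ⟨fun p => g (p.1 - p.2), by fun_prop⟩
  let phi : C(Y, C(Y, ℝ)) := Phi.curry
  -- k u = (y ↦ g (f u - y))
  let k : X → C(Y, ℝ) := fun u => phi (f u)
  have hk_sm : StronglyMeasurable k :=
    phi.continuous.comp_stronglyMeasurable hf.stronglyMeasurable
  have hk_mem : MemLp k 1 lamX := by
    refine MemLp.of_bound hk_sm.aestronglyMeasurable ‖phi‖ ?_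
    exact Filter.Eventually.of_forall fun u => phi.norm_coe_le_norm (f u)
  set K : Lp C(Y, ℝ) 1 lamX := hk_mem.toLp k with hK
  -- translation maps
  let addc : C(X, C(X, X)) := (ContinuousMap.mk (fun p : X × X => p.1 + p.2) continuous_add).curry
  have hmp : ∀ x : X, MeasurePreserving (addc x) lamX lamX := fun x =>
    measurePreserving_add_left lamX x
  -- the translate as an Lp-valued continuous function of x
  have hT : Continuous fun x : X => Lp.compMeasurePreserving (addc x) (hmp x) K :=
    Continuous.compMeasurePreservingLp continuous_const addc.continuous hmp ENNReal.one_ne_top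
  -- the Lipschitz functional
  let Psi : Lp C(Y, ℝ) 1 lamX → ℝ := fun m => ∫ u, (m u) (f u) ∂lamX
  have hint : ∀ m : Lp C(Y, ℝ) 1 lamX, Integrable (fun u => (m u) (f u)) lamX := by
    intro m
    refine Integrable.mono' (L1.integrable_coeFn m).norm ?_ ?_
    · exact (continuous_eval.comp_aestronglyMeasurable
        ((Lp.aestronglyMeasurable m).prodMk hf.aestronglyMeasurable))
    · exact Filter.Eventually.of_forall fun u => by
        simpa using ContinuousMap.norm_coe_le_norm (m u) (f u)
  have hPsi : LipschitzWith 1 Psi := by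
    refine LipschitzWith.of_dist_le_mul fun m m' => ?_
    rw [NNReal.coe_one, one_mul]
    have h1 : dist (Psi m) (Psi m') ≤ ∫ u, ‖(m u) (f u) - (m' u) (f u)‖ ∂lamX := by
      rw [dist_eq_norm]
      calc ‖Psi m - Psi m'‖ = ‖∫ u, ((m u) (f u) - (m' u) (f u)) ∂lamX‖ := by
            rw [integral_sub (hint m) (hint m')]
        _ ≤ ∫ u, ‖(m u) (f u) - (m' u) (f u)‖ ∂lamX := norm_integral_le_integral_norm _
    refine h1.trans ?_
    have h2 : ∫ u, ‖(m u) (f u) - (m' u) (f u)‖ ∂lamX ≤ ∫ u, ‖(m - m') u‖ ∂lamX := by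
      refine integral_mono_ae ((hint m).sub (hint m')).norm (L1.integrable_coeFn (m - m')).norm ?_
      filter_upwards [Lp.coeFn_sub m m'] with u hu
      rw [hu]
      simpa using ContinuousMap.norm_coe_le_norm (m u - m' u) (f u)
    refine h2.trans ?_
    rw [← L1.norm_eq_integral_norm, dist_eq_norm]
  -- identify G with Psi ∘ T
  have hGx : ∀ x : X, (∫ u, g (f (x + u) - f u) ∂lamX) =
      Psi (Lp.compMeasurePreserving (addc x) (hmp x) K) := by
    intro x
    refine (integral_congr_ae ?_).symm
    have h1 : Lp.compMeasurePreserving (addc x) (hmp x) K =ᵐ[lamX] K ∘ (addc x) :=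
      Lp.coeFn_compMeasurePreserving K (hmp x)
    have h2 : (K : X → C(Y,ℝ)) ∘ (addc x) =ᵐ[lamX] k ∘ (addc x) :=
      (hk_mem.coeFn_toLp).comp_tendsto (hmp x).quasiMeasurePreserving.tendsto_ae
    filter_upwards [h1, h2] with u hu1 hu2
    rw [hu1, hu2]
    rfl
  have : (fun x => ∫ u, g (f (x + u) - f u) ∂lamX) =
      fun x => Psi (Lp.compMeasurePreserving (addc x) (hmp x) K) := funext hGx
  rw [this]
  exact hPsi.continuous.comp hT




/-- Let `X`, `Y` be (infinite) compact metrizable abelian groups,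
`λ_X` the normalized Haar measure on `X`, and `f : X → Y` Borel measurable.  Define
`q : X × X → Y` by `q(x, x') = f(x + x') − f(x')`, and for a Borel probability measure
`μ` on `X` let `μ̄ = q_*(μ × λ_X)`.  Then `μ ↦ μ̄` is weak*-continuous at `δ_{0_X}`:
if a sequence `(μ_k)` of Borel probability measures converges weakly to `δ_{0_X}`, then
`μ̄_k` converges weakly to `δ_{0_Y}`.  In particular `δ̄_{0_X} = δ_{0_Y}`. -/
theorem stmt14 {X Y : Type} [TopologicalSpace X] [AddCommGroup X] [IsTopologicalAddGroup X]
    [CompactSpace X] [TopologicalSpace.MetrizableSpace X]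
    [SecondCountableTopology X] [Infinite X] [MeasurableSpace X] [BorelSpace X]
    [TopologicalSpace Y] [AddCommGroup Y] [IsTopologicalAddGroup Y]
    [CompactSpace Y] [TopologicalSpace.MetrizableSpace Y]
    [SecondCountableTopology Y] [Infinite Y] [MeasurableSpace Y] [BorelSpace Y]
    (lamX : Measure X) [lamX.IsAddHaarMeasure] [IsProbabilityMeasure lamX]
    (f : X → Y) (hf : Measurable f) :
    (∀ (μs : ℕ → Measure X), (∀ k, IsProbabilityMeasure (μs k)) →
      (∀ g : X → ℝ, Continuous g →
        Filter.Tendsto (fun k => ∫ x, g x ∂(μs k)) Filter.atTop (nhds (g 0))) →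
      ∀ g : Y → ℝ, Continuous g →
        Filter.Tendsto
          (fun k => ∫ y, g y
            ∂(Measure.map (fun p : X × X => f (p.1 + p.2) - f p.2) ((μs k).prod lamX)))
          Filter.atTop (nhds (g 0))) ∧
    Measure.map (fun p : X × X => f (p.1 + p.2) - f p.2)
        ((Measure.dirac (0 : X)).prod lamX) =
      Measure.dirac (0 : Y) := by
  have hq : Measurable (fun p : X × X => f (p.1 + p.2) - f p.2) :=
    (hf.comp (measurable_fst.add measurable_snd)).sub (hf.comp measurable_snd)
  constructor
  · intro μs hprob hconv g hg
    set G : X → ℝ := fun x => ∫ u, g (f (x + u) - f u) ∂lamX with hG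
    have hGcont : Continuous G := aux_cont lamX f hf g hg
    -- bound on g
    obtain ⟨C, hC⟩ : ∃ C, ∀ y, ‖g y‖ ≤ C := by
      obtain ⟨C, hC⟩ := isCompact_univ.exists_bound_of_continuousOn hg.continuousOn
      exact ⟨C, fun y => hC y (Set.mem_univ y)⟩
    have key : ∀ k, (∫ y, g y
        ∂(Measure.map (fun p : X × X => f (p.1 + p.2) - f p.2) ((μs k).prod lamX)))
        = ∫ x, G x ∂(μs k) := by
      intro k
      haveI := hprob k
      rw [integral_map hq.aemeasurable hg.aestronglyMeasurable]
      have hint : Integrable (fun p : X × X => g (f (p.1 + p.2) - f p.2))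
          ((μs k).prod lamX) := by
        refine Integrable.mono' (integrable_const C) ?_
          (Filter.Eventually.of_forall fun p => hC _)
        exact (hg.comp_stronglyMeasurable hq.stronglyMeasurable).aestronglyMeasurable
      exact integral_prod _ hint
    have hG0 : G 0 = g 0 := by
      have : G 0 = ∫ _u, g 0 ∂lamX := by
        apply integral_congr_ae
        refine Filter.Eventually.of_forall fun u => ?_
        simp
      rw [this, integral_const, probReal_univ, one_smul]
    simp only [key]
    have := hconv G hGcont
    rwa [hG0] at this
  · rw [Measure.dirac_prod, Measure.map_map hq measurable_prodMk_left]
    have : ((fun p : X × X => f (p.1 + p.2) - f p.2) ∘ Prod.mk (0 : X)) =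
        fun _ : X => (0 : Y) := by
      funext u; simp
    rw [this]
    simp [Measure.map_const]
end
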